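/- Let λ and μ be such that λ ≥ 0 is an ordinal and μ ≥ 0 a cardinal, and let L be one of the logics tΣ_{∞,λ}[μ] or tΠ_{∞,λ}[μ], where tΣ_{∞,λ}[μ] (resp. tΠ_{∞,λ}[μ]) is the union of tΣ_{κ,λ}[μ] (resp. tΠ_{κ,λ}[μ]) over all infinite cardinals κ. Let τ be a finite relational vocabulary and τ̱ = τ ∪ {P} for a new unary predicate P. Then for every L formula φ(x̄₁,x̄₂) over τ̱, there is an L reduction sequence over τ that is a Feferman–Vaught decomposition of φ(x̄₁,x̄₂) over the annotated disjoint union operation. -/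

import Mathlib

namespace FV

open Cardinal

/-- A (finite) relational vocabulary: a type of relation symbols with arities. -/
structure Vocab : Type 1 where
  Rel : Type
  arity : Rel → ℕ

/-- A structure over a relational vocabulary. -/
structure Struc (τ : Vocab) : Type 1 where
  carrier : Type
  rel : ∀ R : τ.Rel, (Fin (τ.arity R) → carrier) → Prop

/-- Infinitary formulae in negation normal form over a relational vocabulary,
with free variables among `Fin n`. -/
inductive Formula (τ : Vocab) : ℕ → Type 1 where
  | tru {n : ℕ} : Formula τ n
  | fls {n : ℕ} : Formula τ n
  | rel {n : ℕ} (R : τ.Rel) (ts : Fin (τ.arity R) → Fin n) : Formula τ n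
  | nrel {n : ℕ} (R : τ.Rel) (ts : Fin (τ.arity R) → Fin n) : Formula τ n
  | eq {n : ℕ} (i j : Fin n) : Formula τ n
  | neq {n : ℕ} (i j : Fin n) : Formula τ n
  | iAnd {n : ℕ} (I : Type) (f : I → Formula τ n) : Formula τ n
  | iOr {n : ℕ} (I : Type) (f : I → Formula τ n) : Formula τ n
  | ex {n : ℕ} (φ : Formula τ (n+1)) : Formula τ n
  | all {n : ℕ} (φ : Formula τ (n+1)) : Formula τ n

/-- Binary conjunction (a conjunction of arity 2). -/
def Formula.and {τ : Vocab} {n : ℕ} (φ ψ : Formula τ n) : Formula τ n :=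
  Formula.iAnd Bool (fun b => if b then φ else ψ)

/-- Binary disjunction (a disjunction of arity 2). -/
def Formula.or {τ : Vocab} {n : ℕ} (φ ψ : Formula τ n) : Formula τ n :=
  Formula.iOr Bool (fun b => if b then φ else ψ)

/-- Quantifier-free formulae (in NNF, with finite conjunctions/disjunctions). -/
inductive IsQF {τ : Vocab} : ∀ {n : ℕ}, Formula τ n → Prop where
  | tru {n : ℕ} : IsQF (Formula.tru (τ := τ) (n := n))
  | fls {n : ℕ} : IsQF (Formula.fls (τ := τ) (n := n))
  | rel {n : ℕ} (R : τ.Rel) (ts : Fin (τ.arity R) → Fin n) : IsQF (Formula.rel R ts)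
  | nrel {n : ℕ} (R : τ.Rel) (ts : Fin (τ.arity R) → Fin n) : IsQF (Formula.nrel R ts)
  | eq {n : ℕ} (i j : Fin n) : IsQF (Formula.eq (τ := τ) i j)
  | neq {n : ℕ} (i j : Fin n) : IsQF (Formula.neq (τ := τ) i j)
  | iAnd {n : ℕ} (I : Type) (hI : Finite I) (f : I → Formula τ n)
      (h : ∀ i, IsQF (f i)) : IsQF (Formula.iAnd I f)
  | iOr {n : ℕ} (I : Type) (hI : Finite I) (f : I → Formula τ n)
      (h : ∀ i, IsQF (f i)) : IsQF (Formula.iOr I f)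

/-- Satisfaction of a formula in a structure under an assignment. -/
def Sat {τ : Vocab} (A : Struc τ) : ∀ {n : ℕ}, Formula τ n → (Fin n → A.carrier) → Prop
  | _, .tru, _ => True
  | _, .fls, _ => False
  | _, .rel R ts, v => A.rel R (fun i => v (ts i))
  | _, .nrel R ts, v => ¬ A.rel R (fun i => v (ts i))
  | _, .eq i j, v => v i = v j
  | _, .neq i j, v => v i ≠ v j
  | _, .iAnd I f, v => ∀ i : I, Sat A (f i) v
  | _, .iOr I f, v => ∃ i : I, Sat A (f i) v
  | _, .ex φ, v => ∃ a, Sat A φ (Fin.snoc v a)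
  | _, .all φ, v => ∀ a, Sat A φ (Fin.snoc v a)

/-- The empty assignment. -/
def emptyA {α : Type} : Fin 0 → α := fun i => i.elim0

/-- The (quantifier) rank of a formula: the supremum of the number of quantifiers
on any root-to-leaf path of its parse tree. -/
noncomputable def rank {τ : Vocab} : ∀ {n : ℕ}, Formula τ n → Cardinal
  | _, .iAnd I f => ⨆ i : I, rank (f i)
  | _, .iOr I f => ⨆ i : I, rank (f i)
  | _, .ex φ => rank φ + 1
  | _, .all φ => rank φ + 1
  | _, _ => 0

/-- The size of a formula (number of nodes of its parse tree), as a cardinal. -/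
noncomputable def sizeC {τ : Vocab} : ∀ {n : ℕ}, Formula τ n → Cardinal
  | _, .iAnd I f => 1 + Cardinal.sum (fun i : I => sizeC (f i))
  | _, .iOr I f => 1 + Cardinal.sum (fun i : I => sizeC (f i))
  | _, .ex φ => 1 + sizeC φ
  | _, .all φ => 1 + sizeC φ
  | _, _ => 1

mutual
/-- The class tΣ_{κ,λ} of formulae. -/
inductive TSigma (τ : Vocab) (κ : Cardinal) : Ordinal → ∀ {n : ℕ}, Formula τ n → Prop where
  | qf {n : ℕ} {φ : Formula τ n} : IsQF φ → TSigma τ κ 0 φ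
  | conj {n : ℕ} {lam : Ordinal} (I : Type) (f : I → Formula τ n)
      (hI : Cardinal.mk I < κ) (lam' : I → Ordinal) (hlt : ∀ i, lam' i < lam)
      (h : ∀ i, TPi τ κ (lam' i) (f i)) : TSigma τ κ lam (Formula.iAnd I f)
  | ex {n : ℕ} {lam : Ordinal} {φ : Formula τ (n+1)} :
      TSigma τ κ lam φ → TSigma τ κ lam (Formula.ex φ)

/-- The class tΠ_{κ,λ} of formulae. -/
inductive TPi (τ : Vocab) (κ : Cardinal) : Ordinal → ∀ {n : ℕ}, Formula τ n → Prop where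
  | qf {n : ℕ} {φ : Formula τ n} : IsQF φ → TPi τ κ 0 φ
  | disj {n : ℕ} {lam : Ordinal} (I : Type) (f : I → Formula τ n)
      (hI : Cardinal.mk I < κ) (lam' : I → Ordinal) (hlt : ∀ i, lam' i < lam)
      (h : ∀ i, TSigma τ κ (lam' i) (f i)) : TPi τ κ lam (Formula.iOr I f)
  | all {n : ℕ} {lam : Ordinal} {φ : Formula τ (n+1)} :
      TPi τ κ lam φ → TPi τ κ lam (Formula.all φ)
end

/-- tΣ_{∞,λ}: union of tΣ_{κ,λ} over all infinite cardinals κ. -/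
def TSigmaInf (τ : Vocab) (lam : Ordinal) {n : ℕ} (φ : Formula τ n) : Prop :=
  ∃ κ : Cardinal, ℵ₀ ≤ κ ∧ TSigma τ κ lam φ

/-- tΠ_{∞,λ}: union of tΠ_{κ,λ} over all infinite cardinals κ. -/
def TPiInf (τ : Vocab) (lam : Ordinal) {n : ℕ} (φ : Formula τ n) : Prop :=
  ∃ κ : Cardinal, ℵ₀ ≤ κ ∧ TPi τ κ lam φ

/-- The λ-fold exponential `tower` function (taking suprema at limits). -/
noncomputable def towerC (κ : Cardinal) (l : Ordinal) : Cardinal :=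
  Ordinal.limitRecOn l κ (fun _ ih => (2 : Cardinal) ^ ih)
    (fun o _ ih => ⨆ i : {o' : Ordinal // o' < o}, ih i.1 i.2)

/-- The n-fold exponential `tower` function on naturals. -/
def towerN : ℕ → Cardinal → Cardinal
  | 0, k => k
  | n+1, k => (2 : Cardinal) ^ towerN n k

open Classical in
/-- ρ(κ,λ) = tower(λ,κ) if κ > ω, else ω. -/
noncomputable def rho (κ : Cardinal) (lam : Ordinal) : Cardinal :=
  if ℵ₀ < κ then towerC κ lam else ℵ₀

/-- ∞-propositional formulae over a set `V` of propositional variables. -/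
inductive PropForm (V : Type) : Type 1 where
  | var (v : V) : PropForm V
  | not (p : PropForm V) : PropForm V
  | iAnd (I : Type) (f : I → PropForm V) : PropForm V
  | iOr (I : Type) (f : I → PropForm V) : PropForm V

/-- Binary conjunction of propositional formulae. -/
def PropForm.and {V : Type} (p q : PropForm V) : PropForm V :=
  PropForm.iAnd Bool (fun b => if b then p else q)

/-- Binary disjunction of propositional formulae. -/
def PropForm.or {V : Type} (p q : PropForm V) : PropForm V :=
  PropForm.iOr Bool (fun b => if b then p else q)

/-- Evaluation of an ∞-propositional formula under an assignment. -/
def PropForm.eval {V : Type} (ζ : V → Bool) : PropForm V → Prop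
  | .var v => ζ v = true
  | .not p => ¬ PropForm.eval ζ p
  | .iAnd _ f => ∀ i, PropForm.eval ζ (f i)
  | .iOr _ f => ∃ i, PropForm.eval ζ (f i)

/-- Negation-free ∞-propositional formulae. -/
inductive PropForm.NegFree {V : Type} : PropForm V → Prop where
  | var (v : V) : PropForm.NegFree (.var v)
  | iAnd (I : Type) (f : I → PropForm V) (h : ∀ i, PropForm.NegFree (f i)) :
      PropForm.NegFree (.iAnd I f)
  | iOr (I : Type) (f : I → PropForm V) (h : ∀ i, PropForm.NegFree (f i)) :
      PropForm.NegFree (.iOr I f)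

/-- Finitary (ordinary) propositional formulae. -/
inductive PropForm.Finitary {V : Type} : PropForm V → Prop where
  | var (v : V) : PropForm.Finitary (.var v)
  | not (p : PropForm V) (h : PropForm.Finitary p) : PropForm.Finitary (.not p)
  | iAnd (I : Type) (hI : Finite I) (f : I → PropForm V)
      (h : ∀ i, PropForm.Finitary (f i)) : PropForm.Finitary (.iAnd I f)
  | iOr (I : Type) (hI : Finite I) (f : I → PropForm V)
      (h : ∀ i, PropForm.Finitary (f i)) : PropForm.Finitary (.iOr I f)

/-- Size of an ∞-propositional formula. -/
noncomputable def PropForm.size {V : Type} : PropForm V → Cardinal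
  | .var _ => 1
  | .not p => 1 + PropForm.size p
  | .iAnd I f => 1 + Cardinal.sum (fun i : I => PropForm.size (f i))
  | .iOr I f => 1 + Cardinal.sum (fun i : I => PropForm.size (f i))

/-- A reduction sequence `D(x̄₁, x̄₂) = (Δ₁(x̄₁), Δ₂(x̄₂), β)` over τ. -/
structure RedSeq (τ : Vocab) (r₁ r₂ : ℕ) : Type 1 where
  I : Type
  Δ₁ : I → Formula τ r₁
  Δ₂ : I → Formula τ r₂
  β : PropForm (I × Fin 2)

/-- `(A₁, A₂, ā₁, ā₂)` is a model of the reduction sequence `D`. -/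
def RedSeq.Models {τ : Vocab} {r₁ r₂ : ℕ} (D : RedSeq τ r₁ r₂) (A₁ A₂ : Struc τ)
    (a₁ : Fin r₁ → A₁.carrier) (a₂ : Fin r₂ → A₂.carrier) : Prop :=
  ∃ ζ : D.I × Fin 2 → Bool, D.β.eval ζ ∧
    (∀ i : D.I, (ζ (i, 0) = true ↔ Sat A₁ (D.Δ₁ i) a₁)) ∧
    (∀ i : D.I, (ζ (i, 1) = true ↔ Sat A₂ (D.Δ₂ i) a₂))

/-- Size of a reduction sequence. -/
noncomputable def RedSeq.size {τ : Vocab} {r₁ r₂ : ℕ} (D : RedSeq τ r₁ r₂) : Cardinal :=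
  Cardinal.sum (fun i : D.I => sizeC (D.Δ₁ i)) +
    Cardinal.sum (fun i : D.I => sizeC (D.Δ₂ i)) + D.β.size

/-- The vocabulary τ̱ = τ ∪ {P} for a new unary predicate P (represented by `none`). -/
def annotV (τ : Vocab) : Vocab where
  Rel := Option τ.Rel
  arity := fun R => match R with
    | none => 1
    | some S => τ.arity S

/-- The annotated disjoint union of two τ-structures: their disjoint union,
expanded by interpreting the new unary predicate P as the universe of the first. -/
def adu {τ : Vocab} (A₁ A₂ : Struc τ) : Struc (annotV τ) where
  carrier := A₁.carrier ⊕ A₂.carrier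
  rel := fun R => match R with
    | none => fun v => (v ⟨0, Nat.one_pos⟩).isLeft = true
    | some S => fun v =>
        (∃ w : Fin (τ.arity S) → A₁.carrier, A₁.rel S w ∧ v = fun i => Sum.inl (w i)) ∨
        (∃ w : Fin (τ.arity S) → A₂.carrier, A₂.rel S w ∧ v = fun i => Sum.inr (w i))

/-- `D` is a Feferman–Vaught decomposition of `φ(x̄₁,x̄₂)` over annotated disjoint union. -/
def FVDecompADU {τ : Vocab} {r₁ r₂ : ℕ} (φ : Formula (annotV τ) (r₁ + r₂))
    (D : RedSeq τ r₁ r₂) : Prop :=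
  ∀ (A₁ A₂ : Struc τ) (a₁ : Fin r₁ → A₁.carrier) (a₂ : Fin r₂ → A₂.carrier),
    Sat (adu A₁ A₂) φ (Fin.append (fun i => Sum.inl (a₁ i)) (fun i => Sum.inr (a₂ i)))
      ↔ D.Models A₁ A₂ a₁ a₂

/-- `D` is a Feferman–Vaught decomposition of the sentence `φ` over the binary operation `op`. -/
def FVDecompOp {τ : Vocab} (op : Struc τ → Struc τ → Struc τ) (φ : Formula τ 0)
    (D : RedSeq τ 0 0) : Prop :=
  ∀ A₁ A₂ : Struc τ, Sat (op A₁ A₂) φ emptyA ↔ D.Models A₁ A₂ emptyA emptyA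

/-- A quantifier-free scalar (σ,τ)-interpretation. -/
structure QFInterp (σ τ : Vocab) : Type 1 where
  xiU : Formula σ 1
  xiR : ∀ R : τ.Rel, Formula σ (τ.arity R)
  hU : IsQF xiU
  hR : ∀ R : τ.Rel, IsQF (xiR R)

/-- The τ-structure interpreted in a σ-structure by a quantifier-free interpretation. -/
def QFInterp.app {σ τ : Vocab} (Ξ : QFInterp σ τ) (A : Struc σ) : Struc τ where
  carrier := { a : A.carrier // Sat A Ξ.xiU (fun _ => a) }
  rel := fun R v => Sat A (Ξ.xiR R) (fun i => (v i).1)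

/-- The quantifier-free sum-like binary operation defined by a (τ̱,τ)-interpretation. -/
def sumLike {τ : Vocab} (Ξ : QFInterp (annotV τ) τ) (A₁ A₂ : Struc τ) : Struc τ :=
  Ξ.app (adu A₁ A₂)


/-- Relabelling of free variables. -/
def relabel {τ : Vocab} : ∀ {m n : ℕ}, (Fin m → Fin n) → Formula τ m → Formula τ n
  | _, _, _, .tru => .tru
  | _, _, _, .fls => .fls
  | _, _, g, .rel R ts => .rel R (fun i => g (ts i))
  | _, _, g, .nrel R ts => .nrel R (fun i => g (ts i))
  | _, _, g, .eq i j => .eq (g i) (g j)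
  | _, _, g, .neq i j => .neq (g i) (g j)
  | _, _, g, .iAnd I f => .iAnd I (fun i => relabel g (f i))
  | _, _, g, .iOr I f => .iOr I (fun i => relabel g (f i))
  | _, _, g, .ex φ => .ex (relabel (Fin.snoc (fun i => Fin.castSucc (g i)) (Fin.last _)) φ)
  | _, _, g, .all φ => .all (relabel (Fin.snoc (fun i => Fin.castSucc (g i)) (Fin.last _)) φ)

/-- Negation, in negation normal form. -/
def nnfNeg {τ : Vocab} : ∀ {n : ℕ}, Formula τ n → Formula τ n
  | _, .tru => .fls
  | _, .fls => .tru
  | _, .rel R ts => .nrel R ts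
  | _, .nrel R ts => .rel R ts
  | _, .eq i j => .neq i j
  | _, .neq i j => .eq i j
  | _, .iAnd I f => .iOr I (fun i => nnfNeg (f i))
  | _, .iOr I f => .iAnd I (fun i => nnfNeg (f i))
  | _, .ex φ => .all (nnfNeg φ)
  | _, .all φ => .ex (nnfNeg φ)

/-- Finite conjunction of a tuple of formulae. -/
def finAnd {τ : Vocab} {n : ℕ} : ∀ {r : ℕ}, (Fin r → Formula τ n) → Formula τ n
  | 0, _ => .tru
  | r+1, f => (finAnd (fun i => f (Fin.castSucc i))).and (f (Fin.last r))

/-- A block of `k` existential quantifiers. -/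
def exBlock {τ : Vocab} : ∀ (k : ℕ) {r : ℕ}, Formula τ (r + k) → Formula τ r
  | 0, _, φ => φ
  | k+1, _, φ => exBlock k (Formula.ex φ)

/-- A block of `k` universal quantifiers. -/
def allBlock {τ : Vocab} : ∀ (k : ℕ) {r : ℕ}, Formula τ (r + k) → Formula τ r
  | 0, _, φ => φ
  | k+1, _, φ => allBlock k (Formula.all φ)

mutual
/-- The class tΣ_{(n,k)}: tΣ_n formulae all of whose quantifier blocks have length exactly k. -/
inductive SigNK (τ : Vocab) (k : ℕ) : ℕ → ∀ {r : ℕ}, Formula τ r → Prop where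
  | qf {r : ℕ} {φ : Formula τ r} : IsQF φ → SigNK τ k 0 φ
  | blk {r n : ℕ} (hn : 0 < n) (I : Type) (hI : Finite I) (f : I → Formula τ (r + k))
      (n' : I → ℕ) (hlt : ∀ i, n' i < n) (h : ∀ i, PiNK τ k (n' i) (f i)) :
      SigNK τ k n (exBlock k (Formula.iAnd I f))
/-- The class tΠ_{(n,k)}: tΠ_n formulae all of whose quantifier blocks have length exactly k. -/
inductive PiNK (τ : Vocab) (k : ℕ) : ℕ → ∀ {r : ℕ}, Formula τ r → Prop where
  | qf {r : ℕ} {φ : Formula τ r} : IsQF φ → PiNK τ k 0 φ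
  | blk {r n : ℕ} (hn : 0 < n) (I : Type) (hI : Finite I) (f : I → Formula τ (r + k))
      (n' : I → ℕ) (hlt : ∀ i, n' i < n) (h : ∀ i, SigNK τ k (n' i) (f i)) :
      PiNK τ k n (allBlock k (Formula.iOr I f))
end

/-- Partial isomorphism condition on a pair of tuples. -/
def PIso {τ : Vocab} (A₁ A₂ : Struc τ) (r : ℕ)
    (a₁ : Fin r → A₁.carrier) (a₂ : Fin r → A₂.carrier) : Prop :=
  (∀ i j : Fin r, a₁ i = a₁ j ↔ a₂ i = a₂ j) ∧
  (∀ (R : τ.Rel) (ts : Fin (τ.arity R) → Fin r),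
      A₁.rel R (fun l => a₁ (ts l)) ↔ A₂.rel R (fun l => a₂ (ts l)))

/-- The Duplicator has a winning strategy in the (n,k)-prefix game on the ordered pair
((A₁,ā₁),(A₂,ā₂)): in odd rounds the Spoiler picks a k-tuple in A₁ (and the Duplicator
answers in A₂), in even rounds the roles of the structures are swapped; the Duplicator wins
a play if the chosen tuples collectively form a partial isomorphism. -/
def DWinPrefix {τ : Vocab} (k : ℕ) : ℕ → (A₁ A₂ : Struc τ) → (r : ℕ) →
    (Fin r → A₁.carrier) → (Fin r → A₂.carrier) → Prop
  | 0, A₁, A₂, r, a₁, a₂ => PIso A₁ A₂ r a₁ a₂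
  | n+1, A₁, A₂, r, a₁, a₂ =>
      ∀ b₁ : Fin k → A₁.carrier, ∃ b₂ : Fin k → A₂.carrier,
        DWinPrefix k n A₂ A₁ (r + k) (Fin.append a₂ b₂) (Fin.append a₁ b₁)

/-- The Duplicator has a winning strategy in the (n,k)-tree-prefix game on the set
{(A₁,ā₁),(A₂,ā₂)}: in the first round the Spoiler picks a k-tuple in either structure, and
thereafter in the structure in which the Duplicator chose in the previous round. -/
def DWinTree {τ : Vocab} (k : ℕ) : ℕ → (A₁ A₂ : Struc τ) → (r : ℕ) →
    (Fin r → A₁.carrier) → (Fin r → A₂.carrier) → Prop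
  | 0, A₁, A₂, r, a₁, a₂ => PIso A₁ A₂ r a₁ a₂
  | n+1, A₁, A₂, r, a₁, a₂ =>
      (∀ b₁ : Fin k → A₁.carrier, ∃ b₂ : Fin k → A₂.carrier,
        DWinPrefix k n A₂ A₁ (r + k) (Fin.append a₂ b₂) (Fin.append a₁ b₁)) ∧
      (∀ b₂ : Fin k → A₂.carrier, ∃ b₁ : Fin k → A₁.carrier,
        DWinPrefix k n A₁ A₂ (r + k) (Fin.append a₁ b₁) (Fin.append a₂ b₂))

/-- (A₁,ā₁) ⇛_{(n,k)} (A₂,ā₂) : every tΣ_{(n,k)} formula true of (A₁,ā₁) is true of (A₂,ā₂). -/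
def TransferNK {τ : Vocab} (n k : ℕ) (A₁ A₂ : Struc τ) (r : ℕ)
    (a₁ : Fin r → A₁.carrier) (a₂ : Fin r → A₂.carrier) : Prop :=
  ∀ φ : Formula τ r, SigNK τ k n φ → Sat A₁ φ a₁ → Sat A₂ φ a₂

/-- (A₁,ā₁) ≡_{(n,k)} (A₂,ā₂) : agreement on all tΣ_{(n,k)} formulae. -/
def EquivNK {τ : Vocab} (n k : ℕ) (A₁ A₂ : Struc τ) (r : ℕ)
    (a₁ : Fin r → A₁.carrier) (a₂ : Fin r → A₂.carrier) : Prop :=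
  ∀ φ : Formula τ r, SigNK τ k n φ → (Sat A₁ φ a₁ ↔ Sat A₂ φ a₂)

namespace QFInterp

variable {σ τ : Vocab}

/-- The universe formula ξ_U applied at variable `i`. -/
def uAt (Ξ : QFInterp σ τ) {n : ℕ} (i : Fin n) : Formula σ n :=
  relabel (fun _ : Fin 1 => i) Ξ.xiU

/-- The universe formula ξ_U applied at the last (just-quantified) variable. -/
def uLast (Ξ : QFInterp σ τ) {n : ℕ} : Formula σ (n+1) :=
  Ξ.uAt (Fin.last n)

/-- Close a pending quantifier-block guard. -/
def closeG {n : ℕ} : Option (Bool × Formula σ n) → Formula σ n → Formula σ n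
  | none, r => r
  | some (true, g), r => g.and r
  | some (false, g), r => g.or r

/-- Block-wise translation Ξ(φ) of a formula under a quantifier-free interpretation,
with an accumulator carrying the pending universe-guard of the current quantifier block:
Ξ(R(z̄)) = ξ_R(z̄) ∧ ⋀ᵢ ξ_U(zᵢ); Ξ(¬R(z̄)) = ¬ξ_R(z̄) ∧ ⋀ᵢ ξ_U(zᵢ) (¬ξ_R in NNF);
Ξ commutes with conjunctions and disjunctions; Ξ(∃x̄ ⋀ᵢφᵢ) = ∃x̄(⋀ⱼ ξ_U(xⱼ) ∧ ⋀ᵢΞ(φᵢ));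
Ξ(∀x̄ ⋁ᵢφᵢ) = ∀x̄((⋁ⱼ ¬ξ_U(xⱼ)) ∨ ⋁ᵢΞ(φᵢ)) (¬ξ_U in NNF). -/
def trA (Ξ : QFInterp σ τ) : ∀ {n : ℕ}, Option (Bool × Formula σ n) → Formula τ n → Formula σ n
  | _, mode, .tru => closeG mode .tru
  | _, mode, .fls => closeG mode .fls
  | _, mode, .rel R ts =>
      closeG mode ((relabel ts (Ξ.xiR R)).and (finAnd (fun i => Ξ.uAt (ts i))))
  | _, mode, .nrel R ts =>
      closeG mode ((nnfNeg (relabel ts (Ξ.xiR R))).and (finAnd (fun i => Ξ.uAt (ts i))))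
  | _, mode, .eq i j => closeG mode ((Formula.eq i j).and ((Ξ.uAt i).and (Ξ.uAt j)))
  | _, mode, .neq i j => closeG mode ((Formula.neq i j).and ((Ξ.uAt i).and (Ξ.uAt j)))
  | _, some (true, g), .iAnd I f =>
      .iAnd (Option I) (fun o => o.elim g (fun i => Ξ.trA none (f i)))
  | _, some (false, g), .iOr I f =>
      .iOr (Option I) (fun o => o.elim g (fun i => Ξ.trA none (f i)))
  | _, mode, .iAnd I f => closeG mode (.iAnd I (fun i => Ξ.trA none (f i)))
  | _, mode, .iOr I f => closeG mode (.iOr I (fun i => Ξ.trA none (f i)))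
  | _, some (true, g), .ex φ =>
      .ex (Ξ.trA (some (true, (relabel Fin.castSucc g).and Ξ.uLast)) φ)
  | _, some (false, g), .all φ =>
      .all (Ξ.trA (some (false, (relabel Fin.castSucc g).or (nnfNeg Ξ.uLast))) φ)
  | _, mode, .ex φ => closeG mode (.ex (Ξ.trA (some (true, Ξ.uLast)) φ))
  | _, mode, .all φ => closeG mode (.all (Ξ.trA (some (false, nnfNeg Ξ.uLast)) φ))

/-- The translation Ξ(φ) of a formula. -/
def translate (Ξ : QFInterp σ τ) {n : ℕ} (φ : Formula τ n) : Formula σ n :=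
  Ξ.trA none φ

/-- The size |Ξ| of an interpretation: the sum of the sizes of its formulae. -/
noncomputable def size [Fintype τ.Rel] (Ξ : QFInterp σ τ) : Cardinal :=
  sizeC Ξ.xiU + ∑ R : τ.Rel, sizeC (Ξ.xiR R)

end QFInterp


section Dev
open Classical
noncomputable section

variable {τ : Vocab}

/-- Rename propositional variables. -/
def PropForm.map {V W : Type} (h : V → W) : PropForm V → PropForm W
  | .var v => .var (h v)
  | .not p => .not (p.map h)
  | .iAnd I f => .iAnd I (fun i => (f i).map h)
  | .iOr I f => .iOr I (fun i => (f i).map h)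

lemma PropForm.eval_map {V W : Type} (h : V → W) (ζ : W → Bool) (p : PropForm V) :
    (p.map h).eval ζ ↔ p.eval (ζ ∘ h) := by
  induction p with
  | var v => exact Iff.rfl
  | not p ih => exact not_congr ih
  | iAnd I f ih => exact forall_congr' ih
  | iOr I f ih => exact exists_congr ih

lemma PropForm.NegFree.map {V W : Type} (h : V → W) {p : PropForm V} (hp : p.NegFree) :
    (p.map h).NegFree := by
  induction hp with
  | var v => exact .var _
  | iAnd I f hf ih => exact .iAnd _ _ ih
  | iOr I f hf ih => exact .iOr _ _ ih

lemma PropForm.NegFree.eval_mono {V : Type} {p : PropForm V} (hp : p.NegFree)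
    {ζ ζ' : V → Bool} (hle : ∀ v, ζ v = true → ζ' v = true) :
    p.eval ζ → p.eval ζ' := by
  induction hp with
  | var v => exact hle v
  | iAnd I f hf ih => exact fun h i => ih i (h i)
  | iOr I f hf ih => exact fun ⟨i, h⟩ => ⟨i, ih i h⟩

lemma PropForm.eval_var {V : Type} (ζ : V → Bool) (v : V) :
    (PropForm.var v).eval ζ ↔ ζ v = true := Iff.rfl

lemma PropForm.eval_iOr {V : Type} (ζ : V → Bool) (I : Type) (f : I → PropForm V) :
    (PropForm.iOr I f).eval ζ ↔ ∃ i, (f i).eval ζ := Iff.rfl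

lemma PropForm.eval_iAnd {V : Type} (ζ : V → Bool) (I : Type) (f : I → PropForm V) :
    (PropForm.iAnd I f).eval ζ ↔ ∀ i, (f i).eval ζ := Iff.rfl

lemma PropForm.eval_and {V : Type} (p q : PropForm V) (ζ : V → Bool) :
    (p.and q).eval ζ ↔ p.eval ζ ∧ q.eval ζ := by
  constructor
  · intro h; exact ⟨h true, h false⟩
  · rintro ⟨h1, h2⟩ b; cases b <;> simpa

lemma PropForm.eval_or {V : Type} (p q : PropForm V) (ζ : V → Bool) :
    (p.or q).eval ζ ↔ p.eval ζ ∨ q.eval ζ := by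
  constructor
  · rintro ⟨b, h⟩; cases b
    · right; simpa using h
    · left; simpa using h
  · rintro (h | h)
    · exact ⟨true, by simpa⟩
    · exact ⟨false, by simpa⟩

lemma PropForm.NegFree.and {V : Type} {p q : PropForm V} (hp : p.NegFree) (hq : q.NegFree) :
    (p.and q).NegFree := by
  refine .iAnd _ _ (fun b => ?_); cases b <;> simpa

lemma PropForm.NegFree.or {V : Type} {p q : PropForm V} (hp : p.NegFree) (hq : q.NegFree) :
    (p.or q).NegFree := by
  refine .iOr _ _ (fun b => ?_); cases b <;> simpa

/-- The canonical (exact) truth assignment for a reduction sequence. -/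
def exactA {r₁ r₂ : ℕ} (D : RedSeq τ r₁ r₂) (A₁ A₂ : Struc τ)
    (a₁ : Fin r₁ → A₁.carrier) (a₂ : Fin r₂ → A₂.carrier) : D.I × Fin 2 → Bool :=
  fun q => if q.2 = (0 : Fin 2) then decide (Sat A₁ (D.Δ₁ q.1) a₁)
    else decide (Sat A₂ (D.Δ₂ q.1) a₂)

lemma models_iff_eval {r₁ r₂ : ℕ} (D : RedSeq τ r₁ r₂) (A₁ A₂ : Struc τ)
    (a₁ : Fin r₁ → A₁.carrier) (a₂ : Fin r₂ → A₂.carrier) :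
    D.Models A₁ A₂ a₁ a₂ ↔ D.β.eval (exactA D A₁ A₂ a₁ a₂) := by
  constructor
  · rintro ⟨ζ, hβ, h1, h2⟩
    have hz : ζ = exactA D A₁ A₂ a₁ a₂ := by
      funext q
      obtain ⟨i, j⟩ := q
      fin_cases j
      · show ζ (i, 0) = exactA D A₁ A₂ a₁ a₂ (i, 0)
        rw [Bool.eq_iff_iff]
        simp only [exactA]
        simpa using h1 i
      · show ζ (i, 1) = exactA D A₁ A₂ a₁ a₂ (i, 1)
        rw [Bool.eq_iff_iff]
        simp only [exactA]
        rw [if_neg (by decide)]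
        simp only [decide_eq_true_eq]
        exact h2 i
    rwa [hz] at hβ
  · intro h
    refine ⟨exactA D A₁ A₂ a₁ a₂, h, fun i => ?_, fun i => ?_⟩
    · simp [exactA]
    · simp only [exactA]
      rw [if_neg (by decide)]
      simp

lemma exactA_fst {r₁ r₂ : ℕ} (D : RedSeq τ r₁ r₂) (A₁ A₂ : Struc τ)
    (a₁ : Fin r₁ → A₁.carrier) (a₂ : Fin r₂ → A₂.carrier) (i : D.I) :
    exactA D A₁ A₂ a₁ a₂ (i, 0) = true ↔ Sat A₁ (D.Δ₁ i) a₁ := by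
  have h : exactA D A₁ A₂ a₁ a₂ (i, 0) =
      @decide (Sat A₁ (D.Δ₁ i) a₁) (propDecidable _) := rfl
  rw [h, decide_eq_true_eq]

lemma exactA_snd {r₁ r₂ : ℕ} (D : RedSeq τ r₁ r₂) (A₁ A₂ : Struc τ)
    (a₁ : Fin r₁ → A₁.carrier) (a₂ : Fin r₂ → A₂.carrier) (i : D.I) :
    exactA D A₁ A₂ a₁ a₂ (i, 1) = true ↔ Sat A₂ (D.Δ₂ i) a₂ := by
  have h : exactA D A₁ A₂ a₁ a₂ (i, 1) =
      @decide (Sat A₂ (D.Δ₂ i) a₂) (propDecidable _) := rfl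
  rw [h, decide_eq_true_eq]

/-- Constant reduction sequence. -/
def constD (r₁ r₂ : ℕ) (b : Bool) : RedSeq τ r₁ r₂ where
  I := Empty
  Δ₁ := fun e => e.elim
  Δ₂ := fun e => e.elim
  β := match b with
    | true => .iAnd Empty (fun e => e.elim)
    | false => .iOr Empty (fun e => e.elim)

lemma constD_negFree (r₁ r₂ : ℕ) (b : Bool) : (constD (τ := τ) r₁ r₂ b).β.NegFree := by
  cases b
  · exact .iOr _ _ (fun e => e.elim)
  · exact .iAnd _ _ (fun e => e.elim)

lemma constD_models (r₁ r₂ : ℕ) (b : Bool) (A₁ A₂ : Struc τ) (a₁ a₂) :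
    (constD (τ := τ) r₁ r₂ b).Models A₁ A₂ a₁ a₂ ↔ b = true := by
  cases b
  · rw [models_iff_eval]
    constructor
    · rintro ⟨e, -⟩; exact e.elim
    · intro h; simp at h
  · rw [models_iff_eval]
    constructor
    · intro _; rfl
    · intro _ e; exact e.elim

/-- Single-formula reduction sequence, left side. -/
def atomD1 {r₁ r₂ : ℕ} (δ : Formula τ r₁) : RedSeq τ r₁ r₂ where
  I := PUnit
  Δ₁ := fun _ => δ
  Δ₂ := fun _ => .tru
  β := .var (⟨⟩, 0)

lemma atomD1_models {r₁ r₂ : ℕ} (δ : Formula τ r₁) (A₁ A₂ : Struc τ) (a₁ a₂) :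
    (atomD1 (r₂ := r₂) δ).Models A₁ A₂ a₁ a₂ ↔ Sat A₁ δ a₁ := by
  rw [models_iff_eval]
  show exactA (atomD1 (r₂ := r₂) δ) A₁ A₂ a₁ a₂ (⟨⟩, 0) = true ↔ _
  simp [exactA, atomD1]
  exact ⟨@of_decide_eq_true _ _, @decide_eq_true _ _⟩

/-- Single-formula reduction sequence, right side. -/
def atomD2 {r₁ r₂ : ℕ} (δ : Formula τ r₂) : RedSeq τ r₁ r₂ where
  I := PUnit
  Δ₁ := fun _ => .tru
  Δ₂ := fun _ => δ
  β := .var (⟨⟩, 1)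

lemma atomD2_models {r₁ r₂ : ℕ} (δ : Formula τ r₂) (A₁ A₂ : Struc τ) (a₁ a₂) :
    (atomD2 (r₁ := r₁) δ).Models A₁ A₂ a₁ a₂ ↔ Sat A₂ δ a₂ := by
  rw [models_iff_eval]
  show exactA (atomD2 (r₁ := r₁) δ) A₁ A₂ a₁ a₂ (⟨⟩, 1) = true ↔ _
  simp only [exactA]
  rw [if_neg (by decide)]
  simp [atomD2]
  exact ⟨@of_decide_eq_true _ _, @decide_eq_true _ _⟩

/-- Indexed conjunction of reduction sequences. -/
def andD {r₁ r₂ : ℕ} (I : Type) (D : I → RedSeq τ r₁ r₂) : RedSeq τ r₁ r₂ where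
  I := Σ i, (D i).I
  Δ₁ := fun p => (D p.1).Δ₁ p.2
  Δ₂ := fun p => (D p.1).Δ₂ p.2
  β := .iAnd I (fun i => ((D i).β.map (fun q => (⟨⟨i, q.1⟩, q.2⟩))))

/-- Indexed disjunction of reduction sequences. -/
def orD {r₁ r₂ : ℕ} (I : Type) (D : I → RedSeq τ r₁ r₂) : RedSeq τ r₁ r₂ where
  I := Σ i, (D i).I
  Δ₁ := fun p => (D p.1).Δ₁ p.2
  Δ₂ := fun p => (D p.1).Δ₂ p.2
  β := .iOr I (fun i => ((D i).β.map (fun q => (⟨⟨i, q.1⟩, q.2⟩))))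

lemma exactA_andD {r₁ r₂ : ℕ} (I : Type) (D : I → RedSeq τ r₁ r₂) (i : I)
    (A₁ A₂ : Struc τ) (a₁ a₂) :
    (exactA (andD I D) A₁ A₂ a₁ a₂) ∘ (fun q : (D i).I × Fin 2 => ((⟨⟨i, q.1⟩, q.2⟩ : (andD I D).I × Fin 2))) =
      exactA (D i) A₁ A₂ a₁ a₂ := rfl

lemma exactA_orD {r₁ r₂ : ℕ} (I : Type) (D : I → RedSeq τ r₁ r₂) (i : I)
    (A₁ A₂ : Struc τ) (a₁ a₂) :
    (exactA (orD I D) A₁ A₂ a₁ a₂) ∘ (fun q : (D i).I × Fin 2 => ((⟨⟨i, q.1⟩, q.2⟩ : (orD I D).I × Fin 2))) =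
      exactA (D i) A₁ A₂ a₁ a₂ := rfl

lemma andD_models {r₁ r₂ : ℕ} (I : Type) (D : I → RedSeq τ r₁ r₂) (A₁ A₂ : Struc τ) (a₁ a₂) :
    (andD I D).Models A₁ A₂ a₁ a₂ ↔ ∀ i, (D i).Models A₁ A₂ a₁ a₂ := by
  rw [models_iff_eval]
  show (∀ i, PropForm.eval _ _) ↔ _
  refine forall_congr' (fun i => ?_)
  exact (PropForm.eval_map _ _ _).trans (models_iff_eval _ _ _ _ _).symm

lemma orD_models {r₁ r₂ : ℕ} (I : Type) (D : I → RedSeq τ r₁ r₂) (A₁ A₂ : Struc τ) (a₁ a₂) :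
    (orD I D).Models A₁ A₂ a₁ a₂ ↔ ∃ i, (D i).Models A₁ A₂ a₁ a₂ := by
  rw [models_iff_eval]
  show (∃ i, PropForm.eval _ _) ↔ _
  refine exists_congr (fun i => ?_)
  exact (PropForm.eval_map _ _ _).trans (models_iff_eval _ _ _ _ _).symm

lemma andD_negFree {r₁ r₂ : ℕ} (I : Type) (D : I → RedSeq τ r₁ r₂)
    (h : ∀ i, (D i).β.NegFree) : (andD I D).β.NegFree :=
  .iAnd _ _ (fun i => (h i).map _)

lemma orD_negFree {r₁ r₂ : ℕ} (I : Type) (D : I → RedSeq τ r₁ r₂)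
    (h : ∀ i, (D i).β.NegFree) : (orD I D).β.NegFree :=
  .iOr _ _ (fun i => (h i).map _)

/-- Binary disjunction of reduction sequences. -/
def or2D {r₁ r₂ : ℕ} (D₁ D₂ : RedSeq τ r₁ r₂) : RedSeq τ r₁ r₂ where
  I := D₁.I ⊕ D₂.I
  Δ₁ := Sum.elim D₁.Δ₁ D₂.Δ₁
  Δ₂ := Sum.elim D₁.Δ₂ D₂.Δ₂
  β := (D₁.β.map (fun q => (Sum.inl q.1, q.2))).or (D₂.β.map (fun q => (Sum.inr q.1, q.2)))

/-- Binary conjunction of reduction sequences. -/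
def and2D {r₁ r₂ : ℕ} (D₁ D₂ : RedSeq τ r₁ r₂) : RedSeq τ r₁ r₂ where
  I := D₁.I ⊕ D₂.I
  Δ₁ := Sum.elim D₁.Δ₁ D₂.Δ₁
  Δ₂ := Sum.elim D₁.Δ₂ D₂.Δ₂
  β := (D₁.β.map (fun q => (Sum.inl q.1, q.2))).and (D₂.β.map (fun q => (Sum.inr q.1, q.2)))

lemma or2D_models {r₁ r₂ : ℕ} (D₁ D₂ : RedSeq τ r₁ r₂) (A₁ A₂ : Struc τ) (a₁ a₂) :
    (or2D D₁ D₂).Models A₁ A₂ a₁ a₂ ↔ D₁.Models A₁ A₂ a₁ a₂ ∨ D₂.Models A₁ A₂ a₁ a₂ := by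
  rw [models_iff_eval]
  show PropForm.eval _ (PropForm.or _ _) ↔ _
  exact (PropForm.eval_or _ _ _).trans (or_congr
    ((PropForm.eval_map _ _ _).trans (models_iff_eval D₁ _ _ _ _).symm)
    ((PropForm.eval_map _ _ _).trans (models_iff_eval D₂ _ _ _ _).symm))

lemma and2D_models {r₁ r₂ : ℕ} (D₁ D₂ : RedSeq τ r₁ r₂) (A₁ A₂ : Struc τ) (a₁ a₂) :
    (and2D D₁ D₂).Models A₁ A₂ a₁ a₂ ↔ D₁.Models A₁ A₂ a₁ a₂ ∧ D₂.Models A₁ A₂ a₁ a₂ := by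
  rw [models_iff_eval]
  show PropForm.eval _ (PropForm.and _ _) ↔ _
  exact (PropForm.eval_and _ _ _).trans (and_congr
    ((PropForm.eval_map _ _ _).trans (models_iff_eval D₁ _ _ _ _).symm)
    ((PropForm.eval_map _ _ _).trans (models_iff_eval D₂ _ _ _ _).symm))

lemma or2D_negFree {r₁ r₂ : ℕ} {D₁ D₂ : RedSeq τ r₁ r₂} (h₁ : D₁.β.NegFree)
    (h₂ : D₂.β.NegFree) : (or2D D₁ D₂).β.NegFree := (h₁.map _).or (h₂.map _)

lemma and2D_negFree {r₁ r₂ : ℕ} {D₁ D₂ : RedSeq τ r₁ r₂} (h₁ : D₁.β.NegFree)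
    (h₂ : D₂.β.NegFree) : (and2D D₁ D₂).β.NegFree := (h₁.map _).and (h₂.map _)

end
end Dev
section Dev2
open Classical
noncomputable section

variable {τ : Vocab}

def mix2 {C₁ C₂ : Type} {n r₁ r₂ : ℕ} (g : Fin n → Fin r₁ ⊕ Fin r₂)
    (a₁ : Fin r₁ → C₁) (a₂ : Fin r₂ → C₂) : Fin n → C₁ ⊕ C₂ :=
  fun i => Sum.elim (fun j => Sum.inl (a₁ j)) (fun j => Sum.inr (a₂ j)) (g i)

def GFV2 {n r₁ r₂ : ℕ} (θ : Formula (annotV τ) n) (g : Fin n → Fin r₁ ⊕ Fin r₂)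
    (D : RedSeq τ r₁ r₂) : Prop :=
  ∀ (A₁ A₂ : Struc τ) (a₁ : Fin r₁ → A₁.carrier) (a₂ : Fin r₂ → A₂.carrier),
    Sat (adu A₁ A₂) θ (mix2 g a₁ a₂) ↔ D.Models A₁ A₂ a₁ a₂

lemma qf_decomp {n : ℕ} {θ : Formula (annotV τ) n} (hθ : IsQF θ) :
    ∀ (r₁ r₂ : ℕ) (g : Fin n → Fin r₁ ⊕ Fin r₂),
    ∃ D : RedSeq τ r₁ r₂, Finite D.I ∧ (∀ i, IsQF (D.Δ₁ i) ∧ IsQF (D.Δ₂ i)) ∧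
      D.β.NegFree ∧ GFV2 θ g D := by
  induction hθ with
  | tru =>
    intro r₁ r₂ g
    refine ⟨constD r₁ r₂ true, inferInstanceAs (Finite Empty), fun i => i.elim,
      constD_negFree _ _ _, fun A₁ A₂ a₁ a₂ => ?_⟩
    rw [constD_models]
    exact ⟨fun _ => rfl, fun _ => trivial⟩
  | fls =>
    intro r₁ r₂ g
    refine ⟨constD r₁ r₂ false, inferInstanceAs (Finite Empty), fun i => i.elim,
      constD_negFree _ _ _, fun A₁ A₂ a₁ a₂ => ?_⟩
    rw [constD_models]
    exact ⟨fun h => h.elim, fun h => by simp at h⟩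
  | rel R ts =>
    intro r₁ r₂ g
    cases R with
    | none =>
      rcases hg : g (ts ⟨0, Nat.one_pos⟩) with j | j
      · refine ⟨constD r₁ r₂ true, inferInstanceAs (Finite Empty), fun i => i.elim,
          constD_negFree _ _ _, fun A₁ A₂ a₁ a₂ => ?_⟩
        rw [constD_models]
        constructor
        · intro _; rfl
        · intro _
          show (mix2 g a₁ a₂ (ts ⟨0, Nat.one_pos⟩)).isLeft = true
          simp only [mix2]
          rw [hg]
          rfl
      · refine ⟨constD r₁ r₂ false, inferInstanceAs (Finite Empty), fun i => i.elim,
          constD_negFree _ _ _, fun A₁ A₂ a₁ a₂ => ?_⟩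
        rw [constD_models]
        constructor
        · intro h
          exfalso
          have h1 : (mix2 g a₁ a₂ (ts ⟨0, Nat.one_pos⟩)).isLeft = true := h
          simp only [mix2] at h1
          rw [hg] at h1
          simp at h1
        · intro h; simp at h
    | some S =>
      rcases Nat.eq_zero_or_pos (τ.arity S) with h0 | hpos
      · -- arity 0 : disjunction of the two sides
        have e1 : Fin (τ.arity S) → Fin r₁ := fun i => absurd i.2 (by omega)
        have e2 : Fin (τ.arity S) → Fin r₂ := fun i => absurd i.2 (by omega)
        refine ⟨or2D (atomD1 (.rel S e1)) (atomD2 (.rel S e2)),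
          inferInstanceAs (Finite (PUnit.{1} ⊕ PUnit.{1})), ?_, ?_, ?_⟩
        · rintro (y | y)
          · exact ⟨IsQF.rel _ _, IsQF.tru⟩
          · exact ⟨IsQF.tru, IsQF.rel _ _⟩
        · exact or2D_negFree (.var _) (.var _)
        · intro A₁ A₂ a₁ a₂
          rw [or2D_models, atomD1_models, atomD2_models]
          have hempty : ∀ (C : Type) (u v : Fin (τ.arity S) → C), u = v :=
            fun C u v => funext (fun i => absurd i.2 (by omega))
          constructor
          · rintro (⟨w, hw, -⟩ | ⟨w, hw, -⟩)
            · left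
              show A₁.rel S _
              rw [hempty A₁.carrier (fun i => a₁ (e1 i)) w]
              exact hw
            · right
              show A₂.rel S _
              rw [hempty A₂.carrier (fun i => a₂ (e2 i)) w]
              exact hw
          · rintro (hb | hb)
            · left; exact ⟨_, hb, hempty _ _ _⟩
            · right; exact ⟨_, hb, hempty _ _ _⟩
      · by_cases hL : ∀ i, ∃ j, g (ts i) = Sum.inl j
        · choose jm hj using hL
          refine ⟨atomD1 (.rel S jm), inferInstanceAs (Finite PUnit.{1}),
            fun _ => ⟨IsQF.rel _ _, IsQF.tru⟩, .var _, fun A₁ A₂ a₁ a₂ => ?_⟩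
          rw [atomD1_models]
          show (∃ w, A₁.rel S w ∧ _) ∨ (∃ w, A₂.rel S w ∧ _) ↔ _
          constructor
          · rintro (⟨w, hw, heq⟩ | ⟨w, hw, heq⟩)
            · have hni : w = fun i => a₁ (jm i) := by
                funext i
                have h1 := congrFun heq i
                simp [mix2, hj i] at h1
                exact h1.symm
              rw [hni] at hw; exact hw
            · exfalso
              have h1 := congrFun heq ⟨0, hpos⟩
              simp [mix2, hj] at h1
          · intro h
            left
            exact ⟨fun i => a₁ (jm i), h, funext (fun i => by simp [mix2, hj i])⟩
        · by_cases hR : ∀ i, ∃ j, g (ts i) = Sum.inr j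
          · choose jm hj using hR
            refine ⟨atomD2 (.rel S jm), inferInstanceAs (Finite PUnit.{1}),
              fun _ => ⟨IsQF.tru, IsQF.rel _ _⟩, .var _, fun A₁ A₂ a₁ a₂ => ?_⟩
            rw [atomD2_models]
            show (∃ w, A₁.rel S w ∧ _) ∨ (∃ w, A₂.rel S w ∧ _) ↔ _
            constructor
            · rintro (⟨w, hw, heq⟩ | ⟨w, hw, heq⟩)
              · exfalso
                have h1 := congrFun heq ⟨0, hpos⟩
                simp [mix2, hj] at h1
              · have hni : w = fun i => a₂ (jm i) := by
                  funext i
                  have h1 := congrFun heq i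
                  simp [mix2, hj i] at h1
                  exact h1.symm
                rw [hni] at hw; exact hw
            · intro h
              right
              exact ⟨fun i => a₂ (jm i), h, funext (fun i => by simp [mix2, hj i])⟩
          · refine ⟨constD r₁ r₂ false, inferInstanceAs (Finite Empty), fun i => i.elim,
              constD_negFree _ _ _, fun A₁ A₂ a₁ a₂ => ?_⟩
            rw [constD_models]
            constructor
            · rintro (⟨w, hw, heq⟩ | ⟨w, hw, heq⟩)
              · exfalso; apply hL
                intro i
                have h1 := congrFun heq i
                rcases hgi : g (ts i) with j | j
                · exact ⟨j, rfl⟩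
                · simp [mix2, hgi] at h1
              · exfalso; apply hR
                intro i
                have h1 := congrFun heq i
                rcases hgi : g (ts i) with j | j
                · simp [mix2, hgi] at h1
                · exact ⟨j, rfl⟩
            · intro h; simp at h
  | nrel R ts =>
    intro r₁ r₂ g
    cases R with
    | none =>
      rcases hg : g (ts ⟨0, Nat.one_pos⟩) with j | j
      · refine ⟨constD r₁ r₂ false, inferInstanceAs (Finite Empty), fun i => i.elim,
          constD_negFree _ _ _, fun A₁ A₂ a₁ a₂ => ?_⟩
        rw [constD_models]
        constructor
        · intro h
          exfalso; apply h
          show (mix2 g a₁ a₂ (ts ⟨0, Nat.one_pos⟩)).isLeft = true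
          simp only [mix2]
          rw [hg]
          rfl
        · intro h; simp at h
      · refine ⟨constD r₁ r₂ true, inferInstanceAs (Finite Empty), fun i => i.elim,
          constD_negFree _ _ _, fun A₁ A₂ a₁ a₂ => ?_⟩
        rw [constD_models]
        constructor
        · intro _; rfl
        · intro _
          intro h
          have h1 : (mix2 g a₁ a₂ (ts ⟨0, Nat.one_pos⟩)).isLeft = true := h
          simp only [mix2] at h1
          rw [hg] at h1
          simp at h1
    | some S =>
      rcases Nat.eq_zero_or_pos (τ.arity S) with h0 | hpos
      · have e1 : Fin (τ.arity S) → Fin r₁ := fun i => absurd i.2 (by omega)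
        have e2 : Fin (τ.arity S) → Fin r₂ := fun i => absurd i.2 (by omega)
        refine ⟨and2D (atomD1 (.nrel S e1)) (atomD2 (.nrel S e2)),
          inferInstanceAs (Finite (PUnit.{1} ⊕ PUnit.{1})), ?_, ?_, ?_⟩
        · rintro (y | y)
          · exact ⟨IsQF.nrel _ _, IsQF.tru⟩
          · exact ⟨IsQF.tru, IsQF.nrel _ _⟩
        · exact and2D_negFree (.var _) (.var _)
        · intro A₁ A₂ a₁ a₂
          rw [and2D_models, atomD1_models, atomD2_models]
          have hempty : ∀ (C : Type) (u v : Fin (τ.arity S) → C), u = v :=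
            fun C u v => funext (fun i => absurd i.2 (by omega))
          show ¬ ((∃ w, A₁.rel S w ∧ _) ∨ (∃ w, A₂.rel S w ∧ _)) ↔ _
          constructor
          · intro h
            constructor
            · show ¬ A₁.rel S _
              intro hc; exact h (Or.inl ⟨_, hc, hempty _ _ _⟩)
            · show ¬ A₂.rel S _
              intro hc; exact h (Or.inr ⟨_, hc, hempty _ _ _⟩)
          · rintro ⟨h1, h2⟩
            rintro (⟨w, hw, -⟩ | ⟨w, hw, -⟩)
            · apply h1
              show A₁.rel S _
              rw [hempty A₁.carrier (fun i => a₁ (e1 i)) w]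
              exact hw
            · apply h2
              show A₂.rel S _
              rw [hempty A₂.carrier (fun i => a₂ (e2 i)) w]
              exact hw
      · by_cases hL : ∀ i, ∃ j, g (ts i) = Sum.inl j
        · choose jm hj using hL
          refine ⟨atomD1 (.nrel S jm), inferInstanceAs (Finite PUnit.{1}),
            fun _ => ⟨IsQF.nrel _ _, IsQF.tru⟩, .var _, fun A₁ A₂ a₁ a₂ => ?_⟩
          rw [atomD1_models]
          show ¬ ((∃ w, A₁.rel S w ∧ _) ∨ (∃ w, A₂.rel S w ∧ _)) ↔ ¬ _
          apply not_congr
          constructor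
          · rintro (⟨w, hw, heq⟩ | ⟨w, hw, heq⟩)
            · have hni : w = fun i => a₁ (jm i) := by
                funext i
                have h1 := congrFun heq i
                simp [mix2, hj i] at h1
                exact h1.symm
              rw [hni] at hw; exact hw
            · exfalso
              have h1 := congrFun heq ⟨0, hpos⟩
              simp [mix2, hj] at h1
          · intro h
            left
            exact ⟨fun i => a₁ (jm i), h, funext (fun i => by simp [mix2, hj i])⟩
        · by_cases hR : ∀ i, ∃ j, g (ts i) = Sum.inr j
          · choose jm hj using hR
            refine ⟨atomD2 (.nrel S jm), inferInstanceAs (Finite PUnit.{1}),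
              fun _ => ⟨IsQF.tru, IsQF.nrel _ _⟩, .var _, fun A₁ A₂ a₁ a₂ => ?_⟩
            rw [atomD2_models]
            show ¬ ((∃ w, A₁.rel S w ∧ _) ∨ (∃ w, A₂.rel S w ∧ _)) ↔ ¬ _
            apply not_congr
            constructor
            · rintro (⟨w, hw, heq⟩ | ⟨w, hw, heq⟩)
              · exfalso
                have h1 := congrFun heq ⟨0, hpos⟩
                simp [mix2, hj] at h1
              · have hni : w = fun i => a₂ (jm i) := by
                  funext i
                  have h1 := congrFun heq i
                  simp [mix2, hj i] at h1
                  exact h1.symm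
                rw [hni] at hw; exact hw
            · intro h
              right
              exact ⟨fun i => a₂ (jm i), h, funext (fun i => by simp [mix2, hj i])⟩
          · refine ⟨constD r₁ r₂ true, inferInstanceAs (Finite Empty), fun i => i.elim,
              constD_negFree _ _ _, fun A₁ A₂ a₁ a₂ => ?_⟩
            rw [constD_models]
            constructor
            · intro _; rfl
            · intro _
              rintro (⟨w, hw, heq⟩ | ⟨w, hw, heq⟩)
              · apply hL
                intro i
                have h1 := congrFun heq i
                rcases hgi : g (ts i) with j | j
                · exact ⟨j, rfl⟩
                · simp [mix2, hgi] at h1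
              · apply hR
                intro i
                have h1 := congrFun heq i
                rcases hgi : g (ts i) with j | j
                · simp [mix2, hgi] at h1
                · exact ⟨j, rfl⟩
  | eq i j =>
    intro r₁ r₂ g
    rcases hgi : g i with p | p <;> rcases hgj : g j with q | q
    · refine ⟨atomD1 (.eq p q), inferInstanceAs (Finite PUnit.{1}),
        fun _ => ⟨IsQF.eq _ _, IsQF.tru⟩, .var _, fun A₁ A₂ a₁ a₂ => ?_⟩
      rw [atomD1_models]
      show mix2 g a₁ a₂ i = mix2 g a₁ a₂ j ↔ _
      show _ ↔ a₁ p = a₁ q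
      simp [mix2, hgi, hgj]
    · refine ⟨constD r₁ r₂ false, inferInstanceAs (Finite Empty), fun i => i.elim,
        constD_negFree _ _ _, fun A₁ A₂ a₁ a₂ => ?_⟩
      rw [constD_models]
      show mix2 g a₁ a₂ i = mix2 g a₁ a₂ j ↔ _
      simp [mix2, hgi, hgj]
    · refine ⟨constD r₁ r₂ false, inferInstanceAs (Finite Empty), fun i => i.elim,
        constD_negFree _ _ _, fun A₁ A₂ a₁ a₂ => ?_⟩
      rw [constD_models]
      show mix2 g a₁ a₂ i = mix2 g a₁ a₂ j ↔ _
      simp [mix2, hgi, hgj]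
    · refine ⟨atomD2 (.eq p q), inferInstanceAs (Finite PUnit.{1}),
        fun _ => ⟨IsQF.tru, IsQF.eq _ _⟩, .var _, fun A₁ A₂ a₁ a₂ => ?_⟩
      rw [atomD2_models]
      show mix2 g a₁ a₂ i = mix2 g a₁ a₂ j ↔ _
      show _ ↔ a₂ p = a₂ q
      simp [mix2, hgi, hgj]
  | neq i j =>
    intro r₁ r₂ g
    rcases hgi : g i with p | p <;> rcases hgj : g j with q | q
    · refine ⟨atomD1 (.neq p q), inferInstanceAs (Finite PUnit.{1}),
        fun _ => ⟨IsQF.neq _ _, IsQF.tru⟩, .var _, fun A₁ A₂ a₁ a₂ => ?_⟩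
      rw [atomD1_models]
      show mix2 g a₁ a₂ i ≠ mix2 g a₁ a₂ j ↔ _
      show _ ↔ a₁ p ≠ a₁ q
      simp [mix2, hgi, hgj]
    · refine ⟨constD r₁ r₂ true, inferInstanceAs (Finite Empty), fun i => i.elim,
        constD_negFree _ _ _, fun A₁ A₂ a₁ a₂ => ?_⟩
      rw [constD_models]
      show mix2 g a₁ a₂ i ≠ mix2 g a₁ a₂ j ↔ _
      simp [mix2, hgi, hgj]
    · refine ⟨constD r₁ r₂ true, inferInstanceAs (Finite Empty), fun i => i.elim,
        constD_negFree _ _ _, fun A₁ A₂ a₁ a₂ => ?_⟩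
      rw [constD_models]
      show mix2 g a₁ a₂ i ≠ mix2 g a₁ a₂ j ↔ _
      simp [mix2, hgi, hgj]
    · refine ⟨atomD2 (.neq p q), inferInstanceAs (Finite PUnit.{1}),
        fun _ => ⟨IsQF.tru, IsQF.neq _ _⟩, .var _, fun A₁ A₂ a₁ a₂ => ?_⟩
      rw [atomD2_models]
      show mix2 g a₁ a₂ i ≠ mix2 g a₁ a₂ j ↔ _
      show _ ↔ a₂ p ≠ a₂ q
      simp [mix2, hgi, hgj]
  | iAnd I hI f hf ih =>
    intro r₁ r₂ g
    choose Dm hm using fun i => ih i r₁ r₂ g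
    refine ⟨andD I Dm, ?_, ?_, ?_, ?_⟩
    · haveI := hI
      haveI : ∀ i, Finite (Dm i).I := fun i => (hm i).1
      exact inferInstanceAs (Finite (Σ i, (Dm i).I))
    · rintro ⟨i, y⟩
      exact (hm i).2.1 y
    · exact andD_negFree _ _ (fun i => (hm i).2.2.1)
    · intro A₁ A₂ a₁ a₂
      rw [andD_models]
      exact forall_congr' (fun i => (hm i).2.2.2 A₁ A₂ a₁ a₂)
  | iOr I hI f hf ih =>
    intro r₁ r₂ g
    choose Dm hm using fun i => ih i r₁ r₂ g
    refine ⟨orD I Dm, ?_, ?_, ?_, ?_⟩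
    · haveI := hI
      haveI : ∀ i, Finite (Dm i).I := fun i => (hm i).1
      exact inferInstanceAs (Finite (Σ i, (Dm i).I))
    · rintro ⟨i, y⟩
      exact (hm i).2.1 y
    · exact orD_negFree _ _ (fun i => (hm i).2.2.1)
    · intro A₁ A₂ a₁ a₂
      rw [orD_models]
      exact exists_congr (fun i => (hm i).2.2.2 A₁ A₂ a₁ a₂)

end
end Dev2
section Dev3
open Classical
noncomputable section

variable {τ : Vocab}

lemma sat_exBlock (A : Struc τ) (k : ℕ) : ∀ {r : ℕ} (ψ : Formula τ (r + k)) (v : Fin r → A.carrier),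
    Sat A (exBlock k ψ) v ↔ ∃ b : Fin k → A.carrier, Sat A ψ (Fin.append v b) := by
  induction k with
  | zero =>
    intro r ψ v
    show Sat A ψ v ↔ _
    constructor
    · intro h; exact ⟨Fin.elim0, by rwa [Fin.append_elim0]⟩
    · rintro ⟨b, hb⟩
      have hb0 : b = Fin.elim0 := funext (fun i => i.elim0)
      rw [hb0, Fin.append_elim0] at hb; exact hb
  | succ k ih =>
    intro r ψ v
    show Sat A (exBlock k (Formula.ex ψ)) v ↔ _
    rw [ih]
    constructor
    · rintro ⟨b, hex⟩
      obtain ⟨x, hx⟩ := hex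
      exact ⟨Fin.snoc b x, by rwa [Fin.append_snoc]⟩
    · rintro ⟨b', hb⟩
      refine ⟨Fin.init b', ⟨b' (Fin.last k), ?_⟩⟩
      show Sat A ψ (Fin.snoc (Fin.append v (Fin.init b')) (b' (Fin.last k)))
      rw [← Fin.append_snoc, Fin.snoc_init_self]
      exact hb

lemma sat_allBlock (A : Struc τ) (k : ℕ) : ∀ {r : ℕ} (ψ : Formula τ (r + k)) (v : Fin r → A.carrier),
    Sat A (allBlock k ψ) v ↔ ∀ b : Fin k → A.carrier, Sat A ψ (Fin.append v b) := by
  induction k with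
  | zero =>
    intro r ψ v
    show Sat A ψ v ↔ _
    constructor
    · intro h b
      have hb0 : b = Fin.elim0 := funext (fun i => i.elim0)
      rwa [hb0, Fin.append_elim0]
    · intro h
      have := h Fin.elim0
      rwa [Fin.append_elim0] at this
  | succ k ih =>
    intro r ψ v
    show Sat A (allBlock k (Formula.all ψ)) v ↔ _
    rw [ih]
    constructor
    · intro h b'
      have := h (Fin.init b') (b' (Fin.last k))
      rwa [← Fin.append_snoc, Fin.snoc_init_self] at this
    · intro h b x
      have := h (Fin.snoc b x)
      rwa [Fin.append_snoc] at this

lemma tsigma_exBlock {κ : Cardinal} {lam : Ordinal} (k : ℕ) :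
    ∀ {r : ℕ} {ψ : Formula τ (r + k)}, TSigma τ κ lam ψ → TSigma τ κ lam (exBlock k ψ) := by
  induction k with
  | zero => intro r ψ h; exact h
  | succ k ih => intro r ψ h; exact ih (TSigma.ex h)

lemma tpi_allBlock {κ : Cardinal} {lam : Ordinal} (k : ℕ) :
    ∀ {r : ℕ} {ψ : Formula τ (r + k)}, TPi τ κ lam ψ → TPi τ κ lam (allBlock k ψ) := by
  induction k with
  | zero => intro r ψ h; exact h
  | succ k ih => intro r ψ h; exact ih (TPi.all h)

lemma rank_exBlock (k : ℕ) : ∀ {r : ℕ} (ψ : Formula τ (r + k)),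
    rank (exBlock k ψ) = rank ψ + k := by
  induction k with
  | zero => intro r ψ; show rank ψ = rank ψ + ((0:ℕ) : Cardinal); simp
  | succ k ih =>
    intro r ψ
    show rank (exBlock k (Formula.ex ψ)) = _
    rw [ih]
    show rank ψ + 1 + (k : Cardinal) = rank ψ + ((k+1 : ℕ) : Cardinal)
    push_cast
    ring

lemma rank_allBlock (k : ℕ) : ∀ {r : ℕ} (ψ : Formula τ (r + k)),
    rank (allBlock k ψ) = rank ψ + k := by
  induction k with
  | zero => intro r ψ; show rank ψ = rank ψ + ((0:ℕ) : Cardinal); simp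
  | succ k ih =>
    intro r ψ
    show rank (allBlock k (Formula.all ψ)) = _
    rw [ih]
    show rank ψ + 1 + (k : Cardinal) = rank ψ + ((k+1 : ℕ) : Cardinal)
    push_cast
    ring

lemma cardSup_le {J : Type} {f : J → Cardinal} {a : Cardinal} (h : ∀ j, f j ≤ a) :
    (⨆ j, f j) ≤ a := by
  rcases isEmpty_or_nonempty J with hJ | hJ
  · rw [iSup, Set.range_eq_empty, csSup_empty]
    exact bot_le
  · exact ciSup_le h

lemma rank_qf : ∀ {n : ℕ} {φ : Formula τ n}, IsQF φ → rank φ = 0 := by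
  intro n φ h
  induction h with
  | tru => rfl
  | fls => rfl
  | rel R ts => rfl
  | nrel R ts => rfl
  | eq i j => rfl
  | neq i j => rfl
  | iAnd I hI f hf ih =>
    show (⨆ i, rank (f i)) = 0
    exact le_antisymm (cardSup_le (fun j => le_of_eq (ih j))) zero_le
  | iOr I hI f hf ih =>
    show (⨆ i, rank (f i)) = 0
    exact le_antisymm (cardSup_le (fun j => le_of_eq (ih j))) zero_le

lemma ts_mono : ∀ {n : ℕ} (φ : Formula τ n) {κ κ' : Cardinal} (_ : κ ≤ κ') {lam : Ordinal},
    (TSigma τ κ lam φ → TSigma τ κ' lam φ) ∧ (TPi τ κ lam φ → TPi τ κ' lam φ) := by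
  intro n φ
  induction φ with
  | tru =>
    intro κ κ' hκ lam
    constructor <;> intro h
    · cases h with | qf hq => exact .qf hq
    · cases h with | qf hq => exact .qf hq
  | fls =>
    intro κ κ' hκ lam
    constructor <;> intro h
    · cases h with | qf hq => exact .qf hq
    · cases h with | qf hq => exact .qf hq
  | rel R ts =>
    intro κ κ' hκ lam
    constructor <;> intro h
    · cases h with | qf hq => exact .qf hq
    · cases h with | qf hq => exact .qf hq
  | nrel R ts =>
    intro κ κ' hκ lam
    constructor <;> intro h
    · cases h with | qf hq => exact .qf hq
    · cases h with | qf hq => exact .qf hq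
  | eq i j =>
    intro κ κ' hκ lam
    constructor <;> intro h
    · cases h with | qf hq => exact .qf hq
    · cases h with | qf hq => exact .qf hq
  | neq i j =>
    intro κ κ' hκ lam
    constructor <;> intro h
    · cases h with | qf hq => exact .qf hq
    · cases h with | qf hq => exact .qf hq
  | iAnd I f ih =>
    intro κ κ' hκ lam
    constructor <;> intro h
    · cases h with
      | qf hq => exact .qf hq
      | conj J fj hI lam' hlt hc =>
        exact .conj I f (lt_of_lt_of_le hI hκ) lam' hlt (fun i => (ih i hκ).2 (hc i))
    · cases h with | qf hq => exact .qf hq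
  | iOr I f ih =>
    intro κ κ' hκ lam
    constructor <;> intro h
    · cases h with | qf hq => exact .qf hq
    · cases h with
      | qf hq => exact .qf hq
      | disj J fj hI lam' hlt hc =>
        exact .disj I f (lt_of_lt_of_le hI hκ) lam' hlt (fun i => (ih i hκ).1 (hc i))
  | ex ψ ih =>
    intro κ κ' hκ lam
    constructor <;> intro h
    · cases h with
      | qf hq => cases hq
      | ex h' => exact .ex ((ih hκ).1 h')
    · cases h with | qf hq => cases hq
  | all ψ ih =>
    intro κ κ' hκ lam
    constructor <;> intro h
    · cases h with | qf hq => cases hq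
    · cases h with
      | qf hq => cases hq
      | all h' => exact .all ((ih hκ).2 h')

lemma buildSigma (lam : Ordinal) {r k : ℕ} (J : Type) (c : J → Formula τ (r + k))
    (hc : ∀ j, IsQF (c j) ∨ ∃ l, l < lam ∧ TPiInf τ l (c j))
    (hfin : Finite J ∨ (0:Ordinal) < lam) :
    TSigmaInf τ lam (exBlock k (Formula.iAnd J c)) := by
  rcases eq_zero_or_pos lam with h0 | hpos
  · subst h0
    have hq : ∀ j, IsQF (c j) := by
      intro j
      rcases hc j with hq | ⟨l, hl, -⟩
      · exact hq
      · exact absurd hl (not_lt_zero (a := l))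
    have hfin' : Finite J := by
      rcases hfin with h | h
      · exact h
      · exact absurd h (lt_irrefl _)
    exact ⟨ℵ₀, le_rfl, tsigma_exBlock k (.qf (IsQF.iAnd J hfin' c hq))⟩
  · have hc' : ∀ j, ∃ l, l < lam ∧ ∃ κ, ℵ₀ ≤ κ ∧ TPi τ κ l (c j) := by
      intro j
      rcases hc j with hq | ⟨l, hl, κ, hκ, h⟩
      · exact ⟨0, hpos, ℵ₀, le_rfl, .qf hq⟩
      · exact ⟨l, hl, κ, hκ, h⟩
    choose lj hlj κj hκj hpij using hc'
    set K : Cardinal := Cardinal.sum κj + Cardinal.mk J + ℵ₀ with hK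
    have hKJ : Cardinal.mk J ≤ K := by
      calc Cardinal.mk J ≤ Cardinal.sum κj + Cardinal.mk J := le_add_self
        _ ≤ K := le_self_add
    have hKj : ∀ j, κj j ≤ K := by
      intro j
      calc κj j ≤ Cardinal.sum κj := Cardinal.le_sum κj j
        _ ≤ Cardinal.sum κj + Cardinal.mk J := le_self_add
        _ ≤ K := le_self_add
    have hKinf : ℵ₀ ≤ K := le_add_self
    refine ⟨Order.succ K, hKinf.trans (le_of_lt (Order.lt_succ K)), tsigma_exBlock k ?_⟩
    refine TSigma.conj J c (lt_of_le_of_lt hKJ (Order.lt_succ K)) lj hlj (fun j => ?_)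
    exact (ts_mono (c j) ((hKj j).trans (le_of_lt (Order.lt_succ K)))).2 (hpij j)

lemma buildPi (lam : Ordinal) {r k : ℕ} (J : Type) (c : J → Formula τ (r + k))
    (hc : ∀ j, IsQF (c j) ∨ ∃ l, l < lam ∧ TSigmaInf τ l (c j))
    (hfin : Finite J ∨ (0:Ordinal) < lam) :
    TPiInf τ lam (allBlock k (Formula.iOr J c)) := by
  rcases eq_zero_or_pos lam with h0 | hpos
  · subst h0
    have hq : ∀ j, IsQF (c j) := by
      intro j
      rcases hc j with hq | ⟨l, hl, -⟩
      · exact hq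
      · exact absurd hl (not_lt_zero (a := l))
    have hfin' : Finite J := by
      rcases hfin with h | h
      · exact h
      · exact absurd h (lt_irrefl _)
    exact ⟨ℵ₀, le_rfl, tpi_allBlock k (.qf (IsQF.iOr J hfin' c hq))⟩
  · have hc' : ∀ j, ∃ l, l < lam ∧ ∃ κ, ℵ₀ ≤ κ ∧ TSigma τ κ l (c j) := by
      intro j
      rcases hc j with hq | ⟨l, hl, κ, hκ, h⟩
      · exact ⟨0, hpos, ℵ₀, le_rfl, .qf hq⟩
      · exact ⟨l, hl, κ, hκ, h⟩
    choose lj hlj κj hκj hpij using hc'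
    set K : Cardinal := Cardinal.sum κj + Cardinal.mk J + ℵ₀ with hK
    have hKJ : Cardinal.mk J ≤ K := by
      calc Cardinal.mk J ≤ Cardinal.sum κj + Cardinal.mk J := le_add_self
        _ ≤ K := le_self_add
    have hKj : ∀ j, κj j ≤ K := by
      intro j
      calc κj j ≤ Cardinal.sum κj := Cardinal.le_sum κj j
        _ ≤ Cardinal.sum κj + Cardinal.mk J := le_self_add
        _ ≤ K := le_self_add
    have hKinf : ℵ₀ ≤ K := le_add_self
    refine ⟨Order.succ K, hKinf.trans (le_of_lt (Order.lt_succ K)), tpi_allBlock k ?_⟩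
    refine TPi.disj J c (lt_of_le_of_lt hKJ (Order.lt_succ K)) lj hlj (fun j => ?_)
    exact (ts_mono (c j) ((hKj j).trans (le_of_lt (Order.lt_succ K)))).1 (hpij j)

end
end Dev3
section Dev4
open Classical
noncomputable section

variable {τ : Vocab}

lemma bool_eq_false {b : Bool} (h : ¬ b = true) : b = false := by
  cases b
  · rfl
  · exact absurd rfl h

def mix3 {C₁ C₂ : Type} {n r₁ r₂ k : ℕ} (g : Fin n → (Fin r₁ ⊕ Fin r₂) ⊕ Fin k)
    (a₁ : Fin r₁ → C₁) (a₂ : Fin r₂ → C₂) (b : Fin k → C₁ ⊕ C₂) : Fin n → C₁ ⊕ C₂ :=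
  fun i => Sum.elim (Sum.elim (fun j => Sum.inl (a₁ j)) (fun j => Sum.inr (a₂ j))) b (g i)

def patC1 {k : ℕ} (s : Fin k → Bool) : ℕ := Fintype.card {j : Fin k // s j = true}
def patC2 {k : ℕ} (s : Fin k → Bool) : ℕ := Fintype.card {j : Fin k // s j = false}

def patE1 {k : ℕ} (s : Fin k → Bool) : {j : Fin k // s j = true} ≃ Fin (patC1 s) :=
  Fintype.equivFin _
def patE2 {k : ℕ} (s : Fin k → Bool) : {j : Fin k // s j = false} ≃ Fin (patC2 s) :=
  Fintype.equivFin _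

def patG {n r₁ r₂ k : ℕ} (g : Fin n → (Fin r₁ ⊕ Fin r₂) ⊕ Fin k) (s : Fin k → Bool) :
    Fin n → Fin (r₁ + patC1 s) ⊕ Fin (r₂ + patC2 s) :=
  fun i => Sum.elim
    (Sum.elim (fun j => Sum.inl (Fin.castAdd _ j)) (fun j => Sum.inr (Fin.castAdd _ j)))
    (fun j => if h : s j = true then Sum.inl (Fin.natAdd r₁ (patE1 s ⟨j, h⟩))
      else Sum.inr (Fin.natAdd r₂ (patE2 s ⟨j, bool_eq_false h⟩))) (g i)

def patB {C₁ C₂ : Type} {k : ℕ} (s : Fin k → Bool) (b₁ : Fin (patC1 s) → C₁)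
    (b₂ : Fin (patC2 s) → C₂) : Fin k → C₁ ⊕ C₂ :=
  fun j => if h : s j = true then Sum.inl (b₁ (patE1 s ⟨j, h⟩))
    else Sum.inr (b₂ (patE2 s ⟨j, bool_eq_false h⟩))

lemma mix3_patB {C₁ C₂ : Type} {n r₁ r₂ k : ℕ} (g : Fin n → (Fin r₁ ⊕ Fin r₂) ⊕ Fin k)
    (a₁ : Fin r₁ → C₁) (a₂ : Fin r₂ → C₂) (s : Fin k → Bool) (b₁ : Fin (patC1 s) → C₁)
    (b₂ : Fin (patC2 s) → C₂) :
    mix3 g a₁ a₂ (patB s b₁ b₂) =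
      mix2 (patG g s) (Fin.append a₁ b₁) (Fin.append a₂ b₂) := by
  funext i
  rcases hgi : g i with (j | j) | j
  · simp [mix3, mix2, patG, hgi, Fin.append_left]
  · simp [mix3, mix2, patG, hgi, Fin.append_left]
  · by_cases h : s j = true <;>
      simp [mix3, mix2, patG, patB, hgi, h, Fin.append_right]

lemma isRight_of {C₁ C₂ : Type} (x : C₁ ⊕ C₂) (h : x.isLeft = false) : x.isRight = true := by
  cases x <;> simp_all

lemma patB_surj {C₁ C₂ : Type} {k : ℕ} (b : Fin k → C₁ ⊕ C₂) :
    ∃ (s : Fin k → Bool) (b₁ : Fin (patC1 s) → C₁) (b₂ : Fin (patC2 s) → C₂),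
      b = patB s b₁ b₂ := by
  refine ⟨fun j => (b j).isLeft,
    fun m => (b ((patE1 _).symm m).1).getLeft ((patE1 _).symm m).2,
    fun m => (b ((patE2 _).symm m).1).getRight
      (isRight_of _ ((patE2 _).symm m).2), ?_⟩
  funext j
  by_cases h : (b j).isLeft = true
  · rw [patB, dif_pos h]
    simp only [Equiv.symm_apply_apply]
    exact (Sum.inl_getLeft _ _).symm
  · rw [patB, dif_neg h]
    simp only [Equiv.symm_apply_apply]
    exact (Sum.inr_getRight _ _).symm

lemma exists_split {C₁ C₂ : Type} {n r₁ r₂ k : ℕ} (g : Fin n → (Fin r₁ ⊕ Fin r₂) ⊕ Fin k)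
    (a₁ : Fin r₁ → C₁) (a₂ : Fin r₂ → C₂) (P : (Fin n → C₁ ⊕ C₂) → Prop) :
    (∃ b : Fin k → C₁ ⊕ C₂, P (mix3 g a₁ a₂ b)) ↔
      ∃ (s : Fin k → Bool) (b₁ : Fin (patC1 s) → C₁) (b₂ : Fin (patC2 s) → C₂),
        P (mix2 (patG g s) (Fin.append a₁ b₁) (Fin.append a₂ b₂)) := by
  constructor
  · rintro ⟨b, hb⟩
    obtain ⟨s, b₁, b₂, rfl⟩ := patB_surj b
    rw [mix3_patB] at hb
    exact ⟨s, b₁, b₂, hb⟩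
  · rintro ⟨s, b₁, b₂, hb⟩
    exact ⟨patB s b₁ b₂, by rwa [mix3_patB]⟩

lemma forall_split {C₁ C₂ : Type} {n r₁ r₂ k : ℕ} (g : Fin n → (Fin r₁ ⊕ Fin r₂) ⊕ Fin k)
    (a₁ : Fin r₁ → C₁) (a₂ : Fin r₂ → C₂) (P : (Fin n → C₁ ⊕ C₂) → Prop) :
    (∀ b : Fin k → C₁ ⊕ C₂, P (mix3 g a₁ a₂ b)) ↔
      ∀ (s : Fin k → Bool) (b₁ : Fin (patC1 s) → C₁) (b₂ : Fin (patC2 s) → C₂),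
        P (mix2 (patG g s) (Fin.append a₁ b₁) (Fin.append a₂ b₂)) := by
  constructor
  · intro h s b₁ b₂
    rw [← mix3_patB]
    exact h _
  · intro h b
    obtain ⟨s, b₁, b₂, rfl⟩ := patB_surj b
    rw [mix3_patB]
    exact h s b₁ b₂

lemma block_sigma {n r₁ r₂ k : ℕ} (lam : Ordinal) (ρ : Cardinal)
    (θ : Formula (annotV τ) n) (g : Fin n → (Fin r₁ ⊕ Fin r₂) ⊕ Fin k)
    (prov : ∀ (q₁ q₂ : ℕ) (g' : Fin n → Fin q₁ ⊕ Fin q₂),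
      ∃ D : RedSeq τ q₁ q₂, ((0:Ordinal) < lam ∨ Finite D.I) ∧ D.β.NegFree ∧
        (∀ i, (IsQF (D.Δ₁ i) ∨ ∃ l, l < lam ∧ TPiInf τ l (D.Δ₁ i)) ∧ rank (D.Δ₁ i) ≤ ρ ∧
              (IsQF (D.Δ₂ i) ∨ ∃ l, l < lam ∧ TPiInf τ l (D.Δ₂ i)) ∧ rank (D.Δ₂ i) ≤ ρ) ∧
        GFV2 θ g' D) :
    ∃ D : RedSeq τ r₁ r₂, D.β.NegFree ∧
      (∀ i, (TSigmaInf τ lam (D.Δ₁ i) ∧ rank (D.Δ₁ i) ≤ ρ + k) ∧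
            (TSigmaInf τ lam (D.Δ₂ i) ∧ rank (D.Δ₂ i) ≤ ρ + k)) ∧
      ∀ (A₁ A₂ : Struc τ) (a₁ : Fin r₁ → A₁.carrier) (a₂ : Fin r₂ → A₂.carrier),
        (∃ b : Fin k → (A₁.carrier ⊕ A₂.carrier), Sat (adu A₁ A₂) θ (mix3 g a₁ a₂ b)) ↔
          D.Models A₁ A₂ a₁ a₂ := by
  choose Ds hfin hnf hcls hgfv using
    fun (s : Fin k → Bool) => prov (r₁ + patC1 s) (r₂ + patC2 s) (patG g s)
  refine ⟨⟨(s : Fin k → Bool) × ((Ds s).I → Bool) × ((Ds s).I → Bool),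
    fun p => exBlock (patC1 p.1)
      (Formula.iAnd {i : (Ds p.1).I // p.2.1 i = true} (fun i => (Ds p.1).Δ₁ i.1)),
    fun p => exBlock (patC2 p.1)
      (Formula.iAnd {i : (Ds p.1).I // p.2.2 i = true} (fun i => (Ds p.1).Δ₂ i.1)),
    PropForm.iOr {p : (s : Fin k → Bool) × ((Ds s).I → Bool) × ((Ds s).I → Bool) //
        (Ds p.1).β.eval (fun q => if q.2 = (0 : Fin 2) then p.2.1 q.1 else p.2.2 q.1)}
      (fun p => (PropForm.var (p.1, 0)).and (PropForm.var (p.1, 1)))⟩,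
    ?_, ?_, ?_⟩
  · exact .iOr _ _ (fun p => (PropForm.NegFree.var _).and (.var _))
  · rintro ⟨s, u, w⟩
    constructor
    · constructor
      · refine buildSigma lam _ _ (fun i => (hcls s i.1).1) ?_
        rcases hfin s with h | h
        · exact Or.inr h
        · haveI := h
          exact Or.inl inferInstance
      · rw [rank_exBlock]
        show (⨆ i : {i : (Ds s).I // u i = true}, rank ((Ds s).Δ₁ i.1)) + _ ≤ _
        refine add_le_add (cardSup_le (fun i => (hcls s i.1).2.1)) ?_
        refine (Nat.cast_le).mpr ?_
        calc patC1 s ≤ Fintype.card (Fin k) := Fintype.card_subtype_le _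
          _ = k := Fintype.card_fin k
    · constructor
      · refine buildSigma lam _ _ (fun i => (hcls s i.1).2.2.1) ?_
        rcases hfin s with h | h
        · exact Or.inr h
        · haveI := h
          exact Or.inl inferInstance
      · rw [rank_exBlock]
        show (⨆ i : {i : (Ds s).I // w i = true}, rank ((Ds s).Δ₂ i.1)) + _ ≤ _
        refine add_le_add (cardSup_le (fun i => (hcls s i.1).2.2.2)) ?_
        refine (Nat.cast_le).mpr ?_
        calc patC2 s ≤ Fintype.card (Fin k) := Fintype.card_subtype_le _
          _ = k := Fintype.card_fin k
  · intro A₁ A₂ a₁ a₂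
    rw [exists_split g a₁ a₂ (Sat (adu A₁ A₂) θ), models_iff_eval]
    constructor
    · rintro ⟨s, b₁, b₂, hsat⟩
      have hm := (hgfv s A₁ A₂ _ _).mp hsat
      rw [models_iff_eval] at hm
      have hUW : (Ds s).β.eval (fun q => if q.2 = (0 : Fin 2)
          then (fun i => decide (Sat A₁ ((Ds s).Δ₁ i) (Fin.append a₁ b₁))) q.1
          else (fun i => decide (Sat A₂ ((Ds s).Δ₂ i) (Fin.append a₂ b₂))) q.1) := hm
      rw [PropForm.eval_iOr]
      refine ⟨⟨⟨s, fun i => decide (Sat A₁ ((Ds s).Δ₁ i) (Fin.append a₁ b₁)),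
        fun i => decide (Sat A₂ ((Ds s).Δ₂ i) (Fin.append a₂ b₂))⟩, hUW⟩, ?_⟩
      rw [PropForm.eval_and, PropForm.eval_var, PropForm.eval_var]
      constructor
      · exact (exactA_fst _ _ _ _ _ _).mpr
          ((sat_exBlock A₁ (patC1 s) _ a₁).mpr ⟨b₁, fun i => decide_eq_true_eq.mp i.2⟩)
      · exact (exactA_snd _ _ _ _ _ _).mpr
          ((sat_exBlock A₂ (patC2 s) _ a₂).mpr ⟨b₂, fun i => decide_eq_true_eq.mp i.2⟩)
    · intro h
      rw [PropForm.eval_iOr] at h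
      obtain ⟨⟨⟨s, u, w⟩, hUW⟩, hpe⟩ := h
      rw [PropForm.eval_and, PropForm.eval_var, PropForm.eval_var] at hpe
      obtain ⟨h1, h2⟩ := hpe
      obtain ⟨b₁, hb₁⟩ :=
        (sat_exBlock A₁ (patC1 s) _ a₁).mp ((exactA_fst _ _ _ _ _ _).mp h1)
      obtain ⟨b₂, hb₂⟩ :=
        (sat_exBlock A₂ (patC2 s) _ a₂).mp ((exactA_snd _ _ _ _ _ _).mp h2)
      refine ⟨s, b₁, b₂, (hgfv s A₁ A₂ _ _).mpr ?_⟩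
      rw [models_iff_eval]
      refine (hnf s).eval_mono
        (ζ := fun q => if q.2 = (0 : Fin 2) then u q.1 else w q.1) ?_ hUW
      intro q hq
      have hq' : (if q.2 = (0 : Fin 2) then u q.1 else w q.1) = true := hq
      by_cases h0 : q.2 = (0 : Fin 2)
      · rw [if_pos h0] at hq'
        obtain ⟨i, hi⟩ := q
        have h0' : i = i := rfl
        cases h0
        exact (exactA_fst _ _ _ _ _ _).mpr (hb₁ ⟨i, hq'⟩)
      · rw [if_neg h0] at hq'
        obtain ⟨i, hi⟩ := q
        have h1' : hi = 1 := by
          fin_cases hi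
          · exact absurd rfl h0
          · rfl
        cases h1'
        exact (exactA_snd _ _ _ _ _ _).mpr (hb₂ ⟨i, hq'⟩)

end
end Dev4
section Dev5
open Classical
noncomputable section

variable {τ : Vocab}

lemma block_pi {n r₁ r₂ k : ℕ} (lam : Ordinal) (ρ : Cardinal)
    (θ : Formula (annotV τ) n) (g : Fin n → (Fin r₁ ⊕ Fin r₂) ⊕ Fin k)
    (prov : ∀ (q₁ q₂ : ℕ) (g' : Fin n → Fin q₁ ⊕ Fin q₂),
      ∃ D : RedSeq τ q₁ q₂, ((0:Ordinal) < lam ∨ Finite D.I) ∧ D.β.NegFree ∧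
        (∀ i, (IsQF (D.Δ₁ i) ∨ ∃ l, l < lam ∧ TSigmaInf τ l (D.Δ₁ i)) ∧ rank (D.Δ₁ i) ≤ ρ ∧
              (IsQF (D.Δ₂ i) ∨ ∃ l, l < lam ∧ TSigmaInf τ l (D.Δ₂ i)) ∧ rank (D.Δ₂ i) ≤ ρ) ∧
        GFV2 θ g' D) :
    ∃ D : RedSeq τ r₁ r₂, D.β.NegFree ∧
      (∀ i, (TPiInf τ lam (D.Δ₁ i) ∧ rank (D.Δ₁ i) ≤ ρ + k) ∧
            (TPiInf τ lam (D.Δ₂ i) ∧ rank (D.Δ₂ i) ≤ ρ + k)) ∧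
      ∀ (A₁ A₂ : Struc τ) (a₁ : Fin r₁ → A₁.carrier) (a₂ : Fin r₂ → A₂.carrier),
        (∀ b : Fin k → (A₁.carrier ⊕ A₂.carrier), Sat (adu A₁ A₂) θ (mix3 g a₁ a₂ b)) ↔
          D.Models A₁ A₂ a₁ a₂ := by
  choose Ds hfin hnf hcls hgfv using
    fun (s : Fin k → Bool) => prov (r₁ + patC1 s) (r₂ + patC2 s) (patG g s)
  refine ⟨⟨(s : Fin k → Bool) × ((Ds s).I → Bool) × ((Ds s).I → Bool),
    fun p => allBlock (patC1 p.1)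
      (Formula.iOr {i : (Ds p.1).I // p.2.1 i = false} (fun i => (Ds p.1).Δ₁ i.1)),
    fun p => allBlock (patC2 p.1)
      (Formula.iOr {i : (Ds p.1).I // p.2.2 i = false} (fun i => (Ds p.1).Δ₂ i.1)),
    PropForm.iAnd {p : (s : Fin k → Bool) × ((Ds s).I → Bool) × ((Ds s).I → Bool) //
        ¬ (Ds p.1).β.eval (fun q => if q.2 = (0 : Fin 2) then p.2.1 q.1 else p.2.2 q.1)}
      (fun p => (PropForm.var (p.1, 0)).or (PropForm.var (p.1, 1)))⟩,
    ?_, ?_, ?_⟩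
  · exact .iAnd _ _ (fun p => (PropForm.NegFree.var _).or (.var _))
  · rintro ⟨s, u, w⟩
    constructor
    · constructor
      · refine buildPi lam _ _ (fun i => (hcls s i.1).1) ?_
        rcases hfin s with h | h
        · exact Or.inr h
        · haveI := h
          exact Or.inl inferInstance
      · rw [rank_allBlock]
        show (⨆ i : {i : (Ds s).I // u i = false}, rank ((Ds s).Δ₁ i.1)) + _ ≤ _
        refine add_le_add (cardSup_le (fun i => (hcls s i.1).2.1)) ?_
        refine (Nat.cast_le).mpr ?_
        calc patC1 s ≤ Fintype.card (Fin k) := Fintype.card_subtype_le _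
          _ = k := Fintype.card_fin k
    · constructor
      · refine buildPi lam _ _ (fun i => (hcls s i.1).2.2.1) ?_
        rcases hfin s with h | h
        · exact Or.inr h
        · haveI := h
          exact Or.inl inferInstance
      · rw [rank_allBlock]
        show (⨆ i : {i : (Ds s).I // w i = false}, rank ((Ds s).Δ₂ i.1)) + _ ≤ _
        refine add_le_add (cardSup_le (fun i => (hcls s i.1).2.2.2)) ?_
        refine (Nat.cast_le).mpr ?_
        calc patC2 s ≤ Fintype.card (Fin k) := Fintype.card_subtype_le _
          _ = k := Fintype.card_fin k
  · intro A₁ A₂ a₁ a₂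
    rw [forall_split g a₁ a₂ (Sat (adu A₁ A₂) θ), models_iff_eval]
    constructor
    · intro h
      rw [PropForm.eval_iAnd]
      rintro ⟨⟨s, u, w⟩, hnUW⟩
      simp only [PropForm.eval_or, PropForm.eval_var]
      by_contra hc
      push_neg at hc
      obtain ⟨hc1, hc2⟩ := hc
      have hv1 : ¬ Sat A₁ (allBlock (patC1 s)
          (Formula.iOr {i : (Ds s).I // u i = false} (fun i => (Ds s).Δ₁ i.1))) a₁ :=
        fun hs => hc1 ((exactA_fst _ _ _ _ _ _).mpr hs)
      have hv2 : ¬ Sat A₂ (allBlock (patC2 s)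
          (Formula.iOr {i : (Ds s).I // w i = false} (fun i => (Ds s).Δ₂ i.1))) a₂ :=
        fun hs => hc2 ((exactA_snd _ _ _ _ _ _).mpr hs)
      rw [sat_allBlock] at hv1 hv2
      push_neg at hv1 hv2
      obtain ⟨b₁, hb₁⟩ := hv1
      obtain ⟨b₂, hb₂⟩ := hv2
      apply hnUW
      have hm := (hgfv s A₁ A₂ (Fin.append a₁ b₁) (Fin.append a₂ b₂)).mp (h s b₁ b₂)
      rw [models_iff_eval] at hm
      refine (hnf s).eval_mono
        (ζ := exactA (Ds s) A₁ A₂ (Fin.append a₁ b₁) (Fin.append a₂ b₂)) ?_ hm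
      intro q hq
      obtain ⟨i, j⟩ := q
      fin_cases j
      · show u i = true
        by_contra hui
        have hsat := (exactA_fst _ _ _ _ _ _).mp hq
        exact hb₁ ⟨⟨i, bool_eq_false hui⟩, hsat⟩
      · show w i = true
        by_contra hwi
        have hsat := (exactA_snd _ _ _ _ _ _).mp hq
        exact hb₂ ⟨⟨i, bool_eq_false hwi⟩, hsat⟩
    · intro h s b₁ b₂
      rw [PropForm.eval_iAnd] at h
      refine (hgfv s A₁ A₂ _ _).mpr ?_
      rw [models_iff_eval]
      by_contra hne
      have hnUW : ¬ (Ds s).β.eval (fun q => if q.2 = (0 : Fin 2)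
          then (fun i => decide (Sat A₁ ((Ds s).Δ₁ i) (Fin.append a₁ b₁))) q.1
          else (fun i => decide (Sat A₂ ((Ds s).Δ₂ i) (Fin.append a₂ b₂))) q.1) := hne
      have hp := h ⟨⟨s, fun i => decide (Sat A₁ ((Ds s).Δ₁ i) (Fin.append a₁ b₁)),
        fun i => decide (Sat A₂ ((Ds s).Δ₂ i) (Fin.append a₂ b₂))⟩, hnUW⟩
      simp only [PropForm.eval_or, PropForm.eval_var] at hp
      rcases hp with h1 | h1
      · have hs1 := (sat_allBlock A₁ (patC1 s) _ a₁).mp ((exactA_fst _ _ _ _ _ _).mp h1) b₁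
        obtain ⟨i, hi⟩ := hs1
        have hti : decide (Sat A₁ ((Ds s).Δ₁ i.1) (Fin.append a₁ b₁)) = true :=
          decide_eq_true hi
        have hfi : decide (Sat A₁ ((Ds s).Δ₁ i.1) (Fin.append a₁ b₁)) = false := i.2
        exact Bool.false_ne_true (hfi.symm.trans hti)
      · have hs2 := (sat_allBlock A₂ (patC2 s) _ a₂).mp ((exactA_snd _ _ _ _ _ _).mp h1) b₂
        obtain ⟨i, hi⟩ := hs2
        have hti : decide (Sat A₂ ((Ds s).Δ₂ i.1) (Fin.append a₂ b₂)) = true :=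
          decide_eq_true hi
        have hfi : decide (Sat A₂ ((Ds s).Δ₂ i.1) (Fin.append a₂ b₂)) = false := i.2
        exact Bool.false_ne_true (hfi.symm.trans hti)

end
end Dev5
section Dev6
open Classical
noncomputable section

variable {τ : Vocab}
universe uC

lemma sigma_qf_case {n : ℕ} {θ : Formula (annotV τ) n} (hq : IsQF θ) (lam : Ordinal)
    (r₁ r₂ k : ℕ) (g : Fin n → (Fin r₁ ⊕ Fin r₂) ⊕ Fin k) :
    ∃ D : RedSeq τ r₁ r₂, D.β.NegFree ∧
      (∀ i, (TSigmaInf τ lam (D.Δ₁ i) ∧ rank.{uC} (D.Δ₁ i) ≤ rank θ + k) ∧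
            (TSigmaInf τ lam (D.Δ₂ i) ∧ rank.{uC} (D.Δ₂ i) ≤ rank θ + k)) ∧
      ∀ (A₁ A₂ : Struc τ) (a₁ : Fin r₁ → A₁.carrier) (a₂ : Fin r₂ → A₂.carrier),
        (∃ b : Fin k → (A₁.carrier ⊕ A₂.carrier), Sat (adu A₁ A₂) θ (mix3 g a₁ a₂ b)) ↔
          D.Models A₁ A₂ a₁ a₂ := by
  refine block_sigma lam (rank θ) θ g ?_
  intro q₁ q₂ g'
  obtain ⟨D, hfin, hqfs, hnf, hgfv⟩ := qf_decomp hq q₁ q₂ g'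
  exact ⟨D, Or.inr hfin, hnf, fun i =>
    ⟨Or.inl (hqfs i).1, by rw [rank_qf (hqfs i).1]; exact zero_le,
     Or.inl (hqfs i).2, by rw [rank_qf (hqfs i).2]; exact zero_le⟩, hgfv⟩

lemma pi_qf_case {n : ℕ} {θ : Formula (annotV τ) n} (hq : IsQF θ) (lam : Ordinal)
    (r₁ r₂ k : ℕ) (g : Fin n → (Fin r₁ ⊕ Fin r₂) ⊕ Fin k) :
    ∃ D : RedSeq τ r₁ r₂, D.β.NegFree ∧
      (∀ i, (TPiInf τ lam (D.Δ₁ i) ∧ rank.{uC} (D.Δ₁ i) ≤ rank θ + k) ∧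
            (TPiInf τ lam (D.Δ₂ i) ∧ rank.{uC} (D.Δ₂ i) ≤ rank θ + k)) ∧
      ∀ (A₁ A₂ : Struc τ) (a₁ : Fin r₁ → A₁.carrier) (a₂ : Fin r₂ → A₂.carrier),
        (∀ b : Fin k → (A₁.carrier ⊕ A₂.carrier), Sat (adu A₁ A₂) θ (mix3 g a₁ a₂ b)) ↔
          D.Models A₁ A₂ a₁ a₂ := by
  refine block_pi lam (rank θ) θ g ?_
  intro q₁ q₂ g'
  obtain ⟨D, hfin, hqfs, hnf, hgfv⟩ := qf_decomp hq q₁ q₂ g'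
  exact ⟨D, Or.inr hfin, hnf, fun i =>
    ⟨Or.inl (hqfs i).1, by rw [rank_qf (hqfs i).1]; exact zero_le,
     Or.inl (hqfs i).2, by rw [rank_qf (hqfs i).2]; exact zero_le⟩, hgfv⟩

lemma mix3_snoc {C₁ C₂ : Type} {n r₁ r₂ k : ℕ} (g : Fin n → (Fin r₁ ⊕ Fin r₂) ⊕ Fin k)
    (a₁ : Fin r₁ → C₁) (a₂ : Fin r₂ → C₂) (b' : Fin (k+1) → C₁ ⊕ C₂) :
    mix3 (Fin.snoc (fun i => Sum.map id Fin.castSucc (g i)) (Sum.inr (Fin.last k))) a₁ a₂ b' =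
      Fin.snoc (mix3 g a₁ a₂ (fun j => b' (Fin.castSucc j))) (b' (Fin.last k)) := by
  funext i
  refine Fin.lastCases ?_ ?_ i
  · simp [mix3, Fin.snoc_last]
  · intro i0
    simp only [mix3, Fin.snoc_castSucc]
    rcases hgi : g i0 with (j | j) | j <;> simp [hgi, Sum.map]

lemma main_decomp (lam : Ordinal) :
    (∀ (κ : Cardinal) {n : ℕ} (φ : Formula (annotV τ) n), TSigma (annotV τ) κ lam φ →
      ∀ (r₁ r₂ k : ℕ) (g : Fin n → (Fin r₁ ⊕ Fin r₂) ⊕ Fin k),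
      ∃ D : RedSeq τ r₁ r₂, D.β.NegFree ∧
        (∀ i, (TSigmaInf τ lam (D.Δ₁ i) ∧ rank.{uC} (D.Δ₁ i) ≤ rank φ + k) ∧
              (TSigmaInf τ lam (D.Δ₂ i) ∧ rank.{uC} (D.Δ₂ i) ≤ rank φ + k)) ∧
        ∀ (A₁ A₂ : Struc τ) (a₁ : Fin r₁ → A₁.carrier) (a₂ : Fin r₂ → A₂.carrier),
          (∃ b : Fin k → (A₁.carrier ⊕ A₂.carrier), Sat (adu A₁ A₂) φ (mix3 g a₁ a₂ b)) ↔
            D.Models A₁ A₂ a₁ a₂) ∧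
    (∀ (κ : Cardinal) {n : ℕ} (φ : Formula (annotV τ) n), TPi (annotV τ) κ lam φ →
      ∀ (r₁ r₂ k : ℕ) (g : Fin n → (Fin r₁ ⊕ Fin r₂) ⊕ Fin k),
      ∃ D : RedSeq τ r₁ r₂, D.β.NegFree ∧
        (∀ i, (TPiInf τ lam (D.Δ₁ i) ∧ rank.{uC} (D.Δ₁ i) ≤ rank φ + k) ∧
              (TPiInf τ lam (D.Δ₂ i) ∧ rank.{uC} (D.Δ₂ i) ≤ rank φ + k)) ∧
        ∀ (A₁ A₂ : Struc τ) (a₁ : Fin r₁ → A₁.carrier) (a₂ : Fin r₂ → A₂.carrier),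
          (∀ b : Fin k → (A₁.carrier ⊕ A₂.carrier), Sat (adu A₁ A₂) φ (mix3 g a₁ a₂ b)) ↔
            D.Models A₁ A₂ a₁ a₂) := by
  induction lam using Ordinal.induction with
  | h lam IH =>
  constructor
  · -- Sigma part
    intro κ n φ
    induction φ with
    | tru => intro h r₁ r₂ k g; cases h with | qf hq => exact sigma_qf_case hq _ r₁ r₂ k g
    | fls => intro h r₁ r₂ k g; cases h with | qf hq => exact sigma_qf_case hq _ r₁ r₂ k g
    | rel R ts => intro h r₁ r₂ k g; cases h with | qf hq => exact sigma_qf_case hq _ r₁ r₂ k g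
    | nrel R ts => intro h r₁ r₂ k g; cases h with | qf hq => exact sigma_qf_case hq _ r₁ r₂ k g
    | eq i j => intro h r₁ r₂ k g; cases h with | qf hq => exact sigma_qf_case hq _ r₁ r₂ k g
    | neq i j => intro h r₁ r₂ k g; cases h with | qf hq => exact sigma_qf_case hq _ r₁ r₂ k g
    | iOr I f ihf => intro h r₁ r₂ k g; cases h with | qf hq => exact sigma_qf_case hq _ r₁ r₂ k g
    | all ψ ihψ => intro h; cases h with | qf hq => cases hq
    | iAnd I f ihf =>
      intro h r₁ r₂ k g
      cases h with
      | qf hq => exact sigma_qf_case hq _ r₁ r₂ k g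
      | conj I2 f2 hI lam' hlt hc =>
        refine block_sigma lam (rank.{uC} (Formula.iAnd I f)) (Formula.iAnd I f) g ?_
        intro q₁ q₂ g'
        have hD : ∀ i : I, ∃ D : RedSeq τ q₁ q₂, D.β.NegFree ∧
            (∀ p, (TPiInf τ (lam' i) (D.Δ₁ p) ∧ rank.{uC} (D.Δ₁ p) ≤ rank.{uC} (f i)) ∧
                  (TPiInf τ (lam' i) (D.Δ₂ p) ∧ rank.{uC} (D.Δ₂ p) ≤ rank.{uC} (f i))) ∧
            GFV2 (f i) g' D := by
          intro i
          obtain ⟨D, hnf, hcls, hsem⟩ := (IH (lam' i) (hlt i)).2 κ (f i) (hc i) q₁ q₂ 0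
            (fun x => Sum.inl (g' x))
          refine ⟨D, hnf, fun p => ?_, fun A₁ A₂ a₁ a₂ => ?_⟩
          · obtain ⟨⟨h1, h2⟩, h3, h4⟩ := hcls p
            exact ⟨⟨h1, by simpa using h2⟩, h3, by simpa using h4⟩
          · have hsem' := hsem A₁ A₂ a₁ a₂
            constructor
            · intro hsat
              exact hsem'.mp (fun b => hsat)
            · intro hm
              exact hsem'.mpr hm (fun x => x.elim0)
        choose Dm hnfm hclsm hgfvm using hD
        refine ⟨andD I Dm, ?_, andD_negFree _ _ hnfm, fun p => ?_, fun A₁ A₂ a₁ a₂ => ?_⟩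
        · rcases eq_zero_or_pos lam with h0 | hpos
          · subst h0
            haveI : IsEmpty I := ⟨fun i => not_lt_zero (hlt i)⟩
            haveI : IsEmpty ((andD I Dm).I) := ⟨fun p => IsEmpty.false p.1⟩
            exact Or.inr Finite.of_subsingleton
          · exact Or.inl hpos
        · refine ⟨Or.inr ⟨lam' p.1, hlt p.1, (hclsm p.1 p.2).1.1⟩,
            le_trans ((hclsm p.1 p.2).1.2) (le_ciSup (Cardinal.bddAbove_range _) p.1),
            Or.inr ⟨lam' p.1, hlt p.1, (hclsm p.1 p.2).2.1⟩,
            le_trans ((hclsm p.1 p.2).2.2) (le_ciSup (Cardinal.bddAbove_range _) p.1)⟩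
        · rw [andD_models]
          exact forall_congr' (fun i => hgfvm i A₁ A₂ a₁ a₂)
    | ex ψ ihψ =>
      intro h r₁ r₂ k g
      cases h with
      | qf hq => cases hq
      | ex h' =>
        obtain ⟨D, hnf, hcls, hsem⟩ := ihψ h' r₁ r₂ (k+1)
          (Fin.snoc (fun i => Sum.map id Fin.castSucc (g i)) (Sum.inr (Fin.last k)))
        have hcast : rank ψ + ((k+1 : ℕ) : Cardinal) = rank.{uC} (Formula.ex ψ) + (k : Cardinal) := by
          show _ = rank ψ + 1 + (k : Cardinal)
          push_cast
          ring
        refine ⟨D, hnf, fun i => ⟨⟨(hcls i).1.1, (hcls i).1.2.trans_eq hcast⟩,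
          ⟨(hcls i).2.1, (hcls i).2.2.trans_eq hcast⟩⟩, fun A₁ A₂ a₁ a₂ => ?_⟩
        rw [← hsem A₁ A₂ a₁ a₂]
        constructor
        · rintro ⟨b, hex⟩
          obtain ⟨x, hx⟩ := hex
          refine ⟨Fin.snoc b x, ?_⟩
          rw [mix3_snoc]
          have e1 : (fun j : Fin k => (Fin.snoc b x : Fin (k+1) → A₁.carrier ⊕ A₂.carrier) (Fin.castSucc j)) = b := by
            funext j; exact Fin.snoc_castSucc (α := fun _ => A₁.carrier ⊕ A₂.carrier) ..
          have e2 : (Fin.snoc b x : Fin (k+1) → A₁.carrier ⊕ A₂.carrier) (Fin.last k) = x :=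
            Fin.snoc_last (α := fun _ => A₁.carrier ⊕ A₂.carrier) ..
          rw [e1, e2]
          exact hx
        · rintro ⟨b', hb⟩
          rw [mix3_snoc] at hb
          exact ⟨fun j => b' (Fin.castSucc j), ⟨b' (Fin.last k), hb⟩⟩
  · -- Pi part
    intro κ n φ
    induction φ with
    | tru => intro h r₁ r₂ k g; cases h with | qf hq => exact pi_qf_case hq _ r₁ r₂ k g
    | fls => intro h r₁ r₂ k g; cases h with | qf hq => exact pi_qf_case hq _ r₁ r₂ k g
    | rel R ts => intro h r₁ r₂ k g; cases h with | qf hq => exact pi_qf_case hq _ r₁ r₂ k g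
    | nrel R ts => intro h r₁ r₂ k g; cases h with | qf hq => exact pi_qf_case hq _ r₁ r₂ k g
    | eq i j => intro h r₁ r₂ k g; cases h with | qf hq => exact pi_qf_case hq _ r₁ r₂ k g
    | neq i j => intro h r₁ r₂ k g; cases h with | qf hq => exact pi_qf_case hq _ r₁ r₂ k g
    | iAnd I f ihf => intro h r₁ r₂ k g; cases h with | qf hq => exact pi_qf_case hq _ r₁ r₂ k g
    | ex ψ ihψ => intro h; cases h with | qf hq => cases hq
    | iOr I f ihf =>
      intro h r₁ r₂ k g
      cases h with
      | qf hq => exact pi_qf_case hq _ r₁ r₂ k g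
      | disj I2 f2 hI lam' hlt hc =>
        refine block_pi lam (rank.{uC} (Formula.iOr I f)) (Formula.iOr I f) g ?_
        intro q₁ q₂ g'
        have hD : ∀ i : I, ∃ D : RedSeq τ q₁ q₂, D.β.NegFree ∧
            (∀ p, (TSigmaInf τ (lam' i) (D.Δ₁ p) ∧ rank.{uC} (D.Δ₁ p) ≤ rank.{uC} (f i)) ∧
                  (TSigmaInf τ (lam' i) (D.Δ₂ p) ∧ rank.{uC} (D.Δ₂ p) ≤ rank.{uC} (f i))) ∧
            GFV2 (f i) g' D := by
          intro i
          obtain ⟨D, hnf, hcls, hsem⟩ := (IH (lam' i) (hlt i)).1 κ (f i) (hc i) q₁ q₂ 0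
            (fun x => Sum.inl (g' x))
          refine ⟨D, hnf, fun p => ?_, fun A₁ A₂ a₁ a₂ => ?_⟩
          · obtain ⟨⟨h1, h2⟩, h3, h4⟩ := hcls p
            exact ⟨⟨h1, by simpa using h2⟩, h3, by simpa using h4⟩
          · have hsem' := hsem A₁ A₂ a₁ a₂
            constructor
            · intro hsat
              exact hsem'.mp ⟨fun x => x.elim0, hsat⟩
            · intro hm
              obtain ⟨b, hb⟩ := hsem'.mpr hm
              exact hb
        choose Dm hnfm hclsm hgfvm using hD
        refine ⟨orD I Dm, ?_, orD_negFree _ _ hnfm, fun p => ?_, fun A₁ A₂ a₁ a₂ => ?_⟩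
        · rcases eq_zero_or_pos lam with h0 | hpos
          · subst h0
            haveI : IsEmpty I := ⟨fun i => not_lt_zero (hlt i)⟩
            haveI : IsEmpty ((orD I Dm).I) := ⟨fun p => IsEmpty.false p.1⟩
            exact Or.inr Finite.of_subsingleton
          · exact Or.inl hpos
        · refine ⟨Or.inr ⟨lam' p.1, hlt p.1, (hclsm p.1 p.2).1.1⟩,
            le_trans ((hclsm p.1 p.2).1.2) (le_ciSup (Cardinal.bddAbove_range _) p.1),
            Or.inr ⟨lam' p.1, hlt p.1, (hclsm p.1 p.2).2.1⟩,
            le_trans ((hclsm p.1 p.2).2.2) (le_ciSup (Cardinal.bddAbove_range _) p.1)⟩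
        · rw [orD_models]
          exact exists_congr (fun i => hgfvm i A₁ A₂ a₁ a₂)
    | all ψ ihψ =>
      intro h r₁ r₂ k g
      cases h with
      | qf hq => cases hq
      | all h' =>
        obtain ⟨D, hnf, hcls, hsem⟩ := ihψ h' r₁ r₂ (k+1)
          (Fin.snoc (fun i => Sum.map id Fin.castSucc (g i)) (Sum.inr (Fin.last k)))
        have hcast : rank ψ + ((k+1 : ℕ) : Cardinal) = rank.{uC} (Formula.all ψ) + (k : Cardinal) := by
          show _ = rank ψ + 1 + (k : Cardinal)
          push_cast
          ring
        refine ⟨D, hnf, fun i => ⟨⟨(hcls i).1.1, (hcls i).1.2.trans_eq hcast⟩,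
          ⟨(hcls i).2.1, (hcls i).2.2.trans_eq hcast⟩⟩, fun A₁ A₂ a₁ a₂ => ?_⟩
        rw [← hsem A₁ A₂ a₁ a₂]
        constructor
        · intro hall b'
          rw [mix3_snoc]
          exact hall (fun j => b' (Fin.castSucc j)) (b' (Fin.last k))
        · intro hall b x
          have hx := hall (Fin.snoc b x)
          rw [mix3_snoc] at hx
          have e1 : (fun j : Fin k => (Fin.snoc b x : Fin (k+1) → A₁.carrier ⊕ A₂.carrier) (Fin.castSucc j)) = b := by
            funext j; exact Fin.snoc_castSucc (α := fun _ => A₁.carrier ⊕ A₂.carrier) ..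
          have e2 : (Fin.snoc b x : Fin (k+1) → A₁.carrier ⊕ A₂.carrier) (Fin.last k) = x :=
            Fin.snoc_last (α := fun _ => A₁.carrier ⊕ A₂.carrier) ..
          rw [e1, e2] at hx
          exact hx

end
end Dev6
/-- For L one of tΣ_{∞,λ}[μ] or tΠ_{∞,λ}[μ] (union over all infinite cardinals κ),
every L formula φ(x̄₁,x̄₂) over τ̱ has an L reduction sequence over τ that is a Feferman–Vaught
decomposition of φ over the annotated disjoint union operation. -/
theorem stmt2 (τ : Vocab) [Fintype τ.Rel] (lam : Ordinal) (μ : Cardinal)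
    (r₁ r₂ : ℕ) (φ : Formula (annotV τ) (r₁ + r₂)) :
    (TSigmaInf (annotV τ) lam φ → rank φ ≤ μ →
      ∃ D : RedSeq τ r₁ r₂,
        (∀ i, TSigmaInf τ lam (D.Δ₁ i) ∧ rank (D.Δ₁ i) ≤ μ) ∧
        (∀ i, TSigmaInf τ lam (D.Δ₂ i) ∧ rank (D.Δ₂ i) ≤ μ) ∧
        FVDecompADU φ D) ∧
    (TPiInf (annotV τ) lam φ → rank φ ≤ μ →
      ∃ D : RedSeq τ r₁ r₂,
        (∀ i, TPiInf τ lam (D.Δ₁ i) ∧ rank (D.Δ₁ i) ≤ μ) ∧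
        (∀ i, TPiInf τ lam (D.Δ₂ i) ∧ rank (D.Δ₂ i) ≤ μ) ∧
        FVDecompADU φ D) := by
  have hg0 : ∀ (A₁ A₂ : Struc τ) (a₁ : Fin r₁ → A₁.carrier) (a₂ : Fin r₂ → A₂.carrier)
      (b : Fin 0 → A₁.carrier ⊕ A₂.carrier),
      mix3 (fun i : Fin (r₁ + r₂) =>
          (Sum.inl (Fin.addCases (fun j => Sum.inl j) (fun j => Sum.inr j) i) :
            (Fin r₁ ⊕ Fin r₂) ⊕ Fin 0)) a₁ a₂ b =
        Fin.append (fun i => Sum.inl (a₁ i)) (fun i => Sum.inr (a₂ i)) := by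
    intro A₁ A₂ a₁ a₂ b
    funext i
    refine Fin.addCases ?_ ?_ i
    · intro j
      simp [mix3, Fin.addCases_left, Fin.append_left]
    · intro j
      simp [mix3, Fin.addCases_right, Fin.append_right]
  constructor
  · rintro ⟨κ, hκ, h⟩ hrank
    obtain ⟨D, hnf, hcls, hsem⟩ := (main_decomp lam).1 κ φ h r₁ r₂ 0
      (fun i => Sum.inl (Fin.addCases (fun j => Sum.inl j) (fun j => Sum.inr j) i))
    refine ⟨D, fun i => ⟨(hcls i).1.1, le_trans (by simpa using (hcls i).1.2) hrank⟩,
      fun i => ⟨(hcls i).2.1, le_trans (by simpa using (hcls i).2.2) hrank⟩, ?_⟩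
    intro A₁ A₂ a₁ a₂
    rw [← hsem A₁ A₂ a₁ a₂]
    constructor
    · intro hs
      exact ⟨fun x => x.elim0, by rw [hg0]; exact hs⟩
    · rintro ⟨b, hb⟩
      rwa [hg0] at hb
  · rintro ⟨κ, hκ, h⟩ hrank
    obtain ⟨D, hnf, hcls, hsem⟩ := (main_decomp lam).2 κ φ h r₁ r₂ 0
      (fun i => Sum.inl (Fin.addCases (fun j => Sum.inl j) (fun j => Sum.inr j) i))
    refine ⟨D, fun i => ⟨(hcls i).1.1, le_trans (by simpa using (hcls i).1.2) hrank⟩,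
      fun i => ⟨(hcls i).2.1, le_trans (by simpa using (hcls i).2.2) hrank⟩, ?_⟩
    intro A₁ A₂ a₁ a₂
    rw [← hsem A₁ A₂ a₁ a₂]
    constructor
    · intro hs b
      rw [hg0]
      exact hs
    · intro hb
      have := hb (fun x => x.elim0)
      rwa [hg0] at this

end FV
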